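/- Let Γ be a k-graph, E a k-coloured graph, and C a complete, associative collection of squares in E. Suppose ψ: E_Γ → E is a coloured-graph isomorphism from the skeleton of Γ to E such that ψ ∘ φ ∈ C for every square φ ∈ C_Γ. Then the map γ ↦ θ_γ, where θ_γ(m) = ψ(γ(m)) on vertices and θ_γ(m + v_i) = ψ(γ(m, m+e_i)) on edges, is a k-graph isomorphism from Γ onto Λ_{(E,C)}. -/

import Mathlib

namespace Paper


/-- A `k`-graph structure on object type `Obj` and morphism type `Hom`:
a countable category with a degree functor to `ℕ^k` satisfying the
unique factorisation property.  `comp μ ν` is the composite "μ then ν",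
meaningful when `src μ = rng ν`. -/
structure KGraph (k : ℕ) (Obj Hom : Type) where
  src : Hom → Obj
  rng : Hom → Obj
  comp : Hom → Hom → Hom
  idm : Obj → Hom
  d : Hom → Fin k → ℕ
  countObj : Countable Obj
  countHom : Countable Hom
  src_comp : ∀ μ ν, src μ = rng ν → src (comp μ ν) = src ν
  rng_comp : ∀ μ ν, src μ = rng ν → rng (comp μ ν) = rng μ
  comp_assoc : ∀ l μ ν, src l = rng μ → src μ = rng ν →
    comp (comp l μ) ν = comp l (comp μ ν)
  src_idm : ∀ v, src (idm v) = v
  rng_idm : ∀ v, rng (idm v) = v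
  comp_idm : ∀ μ, comp μ (idm (src μ)) = μ
  idm_comp : ∀ μ, comp (idm (rng μ)) μ = μ
  d_comp : ∀ μ ν, src μ = rng ν → d (comp μ ν) = d μ + d ν
  d_idm : ∀ v, d (idm v) = 0
  factor : ∀ (lam : Hom) (m n : Fin k → ℕ), d lam = m + n →
    ∃! p : Hom × Hom, src p.1 = rng p.2 ∧ comp p.1 p.2 = lam ∧ d p.1 = m ∧ d p.2 = n

variable {k : ℕ} {Obj Hom : Type}

/-- `IsSegment Λ lam seg p q` says that `seg = lam(p,q)`, i.e. `seg` is the middle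
factor of `lam` in a factorisation `lam = a ⬝ seg ⬝ b` with `d a = p`, `d seg = q - p`. -/
def IsSegment (Λ : KGraph k Obj Hom) (lam seg : Hom) (p q : Fin k → ℕ) : Prop :=
  ∃ a b : Hom, Λ.src a = Λ.rng seg ∧ Λ.src seg = Λ.rng b ∧
    Λ.comp a (Λ.comp seg b) = lam ∧ Λ.d a = p ∧ Λ.d seg = q - p

/-- Aperiodicity in the finite-path formulation of Robertson–Sims. -/
def Aperiodic (Λ : KGraph k Obj Hom) : Prop :=
  ∀ (v : Obj) (m n : Fin k → ℕ), m ≠ n → ∃ lam : Hom,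
    Λ.rng lam = v ∧ m ⊔ n ≤ Λ.d lam ∧
    ∀ s1 s2 : Hom, IsSegment Λ lam s1 m (m + (Λ.d lam - (m ⊔ n))) →
      IsSegment Λ lam s2 n (n + (Λ.d lam - (m ⊔ n))) → s1 ≠ s2

def NoSources (Λ : KGraph k Obj Hom) : Prop :=
  ∀ (v : Obj) (i : Fin k), ∃ h : Hom, Λ.rng h = v ∧ Λ.d h = Pi.single i 1

def RowFinite (Λ : KGraph k Obj Hom) : Prop :=
  ∀ (v : Obj) (i : Fin k), {h : Hom | Λ.rng h = v ∧ Λ.d h = Pi.single i 1}.Finite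

def Cofinal (Λ : KGraph k Obj Hom) : Prop :=
  ∀ v w : Obj, ∃ n : Fin k → ℕ, ∀ lam : Hom, Λ.rng lam = w → Λ.d lam = n →
    ∃ μ : Hom, Λ.rng μ = v ∧ Λ.src μ = Λ.src lam

/-- A degree-preserving functor between `k`-graphs. -/
structure KFunctor {O H O' H' : Type} (Λ : KGraph k O H) (Γ : KGraph k O' H') where
  onObj : O → O'
  onHom : H → H'
  rng_comm : ∀ h, Γ.rng (onHom h) = onObj (Λ.rng h)
  src_comm : ∀ h, Γ.src (onHom h) = onObj (Λ.src h)
  idm_comm : ∀ v, onHom (Λ.idm v) = Γ.idm (onObj v)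
  comp_comm : ∀ μ ν, Λ.src μ = Λ.rng ν → onHom (Λ.comp μ ν) = Γ.comp (onHom μ) (onHom ν)
  d_comm : ∀ h, Γ.d (onHom h) = Λ.d h

/-- An infinite path in a `k`-graph: a `k`-graph morphism from `Ω_k`. -/
structure InfPath (Λ : KGraph k Obj Hom) where
  vert : (Fin k → ℕ) → Obj
  seg : ∀ p q : Fin k → ℕ, p ≤ q → Hom
  rng_seg : ∀ p q h, Λ.rng (seg p q h) = vert p
  src_seg : ∀ p q h, Λ.src (seg p q h) = vert q
  d_seg : ∀ p q h, Λ.d (seg p q h) = q - p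
  comp_seg : ∀ p q r (h1 : p ≤ q) (h2 : q ≤ r),
    Λ.comp (seg p q h1) (seg q r h2) = seg p r (h1.trans h2)

/-- The shift `σ^p` on infinite paths. -/
def InfPath.shift (Λ : KGraph k Obj Hom) (p : Fin k → ℕ) (x : InfPath Λ) : InfPath Λ where
  vert q := x.vert (p + q)
  seg q r h := x.seg (p + q) (p + r) (add_le_add (le_refl p) h)
  rng_seg q r h := x.rng_seg _ _ _
  src_seg q r h := x.src_seg _ _ _
  d_seg q r h := by
    rw [x.d_seg]
    funext i
    simp [Nat.add_sub_add_left]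
  comp_seg q r t h1 h2 := x.comp_seg _ _ _ _ _



/-- A `k`-coloured (directed) graph. -/
structure ColouredGraph (k : ℕ) where
  V : Type
  E : Type
  r : E → V
  s : E → V
  c : E → Fin k

variable {k : ℕ}

/-- The model grid `E_{k,m}`: vertices `{n ≤ m}`, an edge of colour `i`
from `n + e_i` to `n` whenever `n + e_i ≤ m`. -/
def grid (k : ℕ) (m : Fin k → ℕ) : ColouredGraph k where
  V := {n : Fin k → ℕ // n ≤ m}
  E := {p : (Fin k → ℕ) × Fin k // p.1 + Pi.single p.2 1 ≤ m}
  r e := ⟨e.1.1, le_trans (le_add_of_nonneg_right zero_le) e.2⟩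
  s e := ⟨e.1.1 + Pi.single e.1.2 1, e.2⟩
  c e := e.1.2

/-- A coloured-graph morphism. -/
structure CGM (E F : ColouredGraph k) where
  onV : E.V → F.V
  onE : E.E → F.E
  r_comm : ∀ e, F.r (onE e) = onV (E.r e)
  s_comm : ∀ e, F.s (onE e) = onV (E.s e)
  c_comm : ∀ e, F.c (onE e) = E.c e

/-- Composition of coloured-graph morphisms. -/
def CGM.compose {E F G : ColouredGraph k} (g : CGM F G) (f : CGM E F) : CGM E G where
  onV := g.onV ∘ f.onV
  onE := g.onE ∘ f.onE
  r_comm e := by simp [Function.comp, g.r_comm, f.r_comm]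
  s_comm e := by simp [Function.comp, g.s_comm, f.s_comm]
  c_comm e := by simp [Function.comp, g.c_comm, f.c_comm]

/-- The range `λ(0)` of a coloured-graph morphism defined on a grid. -/
def gRng {E : ColouredGraph k} {m : Fin k → ℕ} (lam : CGM (grid k m) E) : E.V :=
  lam.onV ⟨0, zero_le⟩

/-- The source `λ(m)` of a coloured-graph morphism defined on a grid. -/
def gSrc {E : ColouredGraph k} {m : Fin k → ℕ} (lam : CGM (grid k m) E) : E.V :=
  lam.onV ⟨m, le_refl m⟩

/-- The translated restriction `λ|*_{[p, p+m']}` of `λ : E_{k,M} → E`. -/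
def restrictTo {E : ColouredGraph k} {M : Fin k → ℕ} (lam : CGM (grid k M) E)
    (p m' : Fin k → ℕ) (h : p + m' ≤ M) : CGM (grid k m') E where
  onV n := lam.onV ⟨p + n.1, le_trans (add_le_add (le_refl p) n.2) h⟩
  onE e := lam.onE ⟨(p + e.1.1, e.1.2), by
    rw [add_assoc]; exact le_trans (add_le_add (le_refl p) e.2) h⟩
  r_comm e := lam.r_comm _
  s_comm e := by
    refine (lam.s_comm _).trans ?_
    exact congrArg lam.onV (Subtype.ext (add_assoc p e.1.1 _))
  c_comm e := lam.c_comm _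

/-- A coloured-graph morphism from some grid into `E`, bundled with its degree. -/
def MorphOf (E : ColouredGraph k) : Type := Σ m : Fin k → ℕ, CGM (grid k m) E

/-- The shape (abelianized colouring) of a finite path, as an element of `ℕ^k`. -/
def colourVec (E : ColouredGraph k) (x : List E.E) : Fin k → ℕ :=
  (x.map (fun e => Pi.single (E.c e) 1)).sum

/-- A list of edges is a path when consecutive edges are composable. -/
def IsPathList (E : ColouredGraph k) (x : List E.E) : Prop :=
  x.Chain' (fun e f => E.s e = E.r f)

/-- `x` traverses `λ`: the edges of `x` match those of `λ` along the staircase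
determined by the colour sequence of `x`. -/
def Traverses {E : ColouredGraph k} {m : Fin k → ℕ} (lam : CGM (grid k m) E)
    (x : List E.E) : Prop :=
  colourVec E x = m ∧ ∀ (l : ℕ) (hl : l < x.length),
    ∃ h : colourVec E (x.take l) + Pi.single (E.c (x.get ⟨l, hl⟩)) 1 ≤ m,
      lam.onE ⟨(colourVec E (x.take l), E.c (x.get ⟨l, hl⟩)), h⟩ = x.get ⟨l, hl⟩

/-- A bundled grid morphism is a square when its degree is `e_i + e_j` with `i ≠ j`. -/
def IsSquarePair {E : ColouredGraph k} (φ : MorphOf E) : Prop :=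
  ∃ i j : Fin k, i ≠ j ∧ φ.1 = Pi.single i 1 + Pi.single j 1

/-- A complete collection of squares. -/
def Complete (E : ColouredGraph k) (C : Set (MorphOf E)) : Prop :=
  (∀ φ ∈ C, IsSquarePair φ) ∧
  ∀ e f : E.E, E.s e = E.r f → E.c e ≠ E.c f →
    ∃! φ : MorphOf E, φ ∈ C ∧ Traverses φ.2 [e, f]

/-- `CRel C e f f' e'` means `ef ∼_C f'e'`: the paths `ef` and `f'e'` traverse a
common square of `C`, with `f'` of the colour of `f` and `e'` of the colour of `e`. -/
def CRel (E : ColouredGraph k) (C : Set (MorphOf E)) (e f f' e' : E.E) : Prop :=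
  E.c f' = E.c f ∧ E.c e' = E.c e ∧
  ∃ φ ∈ C, Traverses φ.2 [e, f] ∧ Traverses φ.2 [f', e']

/-- Associativity of a complete collection of squares. -/
def Associative (E : ColouredGraph k) (C : Set (MorphOf E)) : Prop :=
  ∀ f g h f1 f2 g1 g2 h1 h2 f1' f2' g1' g2' h1' h2' : E.E,
    E.s f = E.r g → E.s g = E.r h →
    E.c f ≠ E.c g → E.c g ≠ E.c h → E.c f ≠ E.c h →
    CRel E C f g g1' f1' → CRel E C f1' h h1' f2' → CRel E C g1' h1' h2' g2' →
    CRel E C g h h1 g1 → CRel E C f h1 h2 f1 → CRel E C f1 g1 g2 f2 →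
    f2 = f2' ∧ g2 = g2' ∧ h2 = h2'

/-- `λ` is `C`-compatible: every square occurring in `λ` belongs to `C`. -/
def CComp (E : ColouredGraph k) (C : Set (MorphOf E)) {M : Fin k → ℕ}
    (lam : CGM (grid k M) E) : Prop :=
  ∀ (p : Fin k → ℕ) (i j : Fin k), i ≠ j →
    ∀ h : p + (Pi.single i 1 + Pi.single j 1) ≤ M,
      (⟨Pi.single i 1 + Pi.single j 1,
        restrictTo lam p (Pi.single i 1 + Pi.single j 1) h⟩ : MorphOf E) ∈ C

/-- A finite path in a coloured graph, remembering its range vertex (so that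
length-zero paths are vertices). -/
structure FinPath (E : ColouredGraph k) where
  rng : E.V
  edges : List E.E
  chain : edges.Chain' (fun e f => E.s e = E.r f)
  head_rng : ∀ e ∈ edges.head?, E.r e = rng

/-- Source vertex of a finite path. -/
def FinPath.src {E : ColouredGraph k} (x : FinPath E) : E.V :=
  (x.edges.getLast?).elim x.rng E.s

/-- One application of a commuting square: replace a consecutive bicoloured pair
by its `C`-equivalent pair. -/
def SwapStep (E : ColouredGraph k) (C : Set (MorphOf E)) (x y : List E.E) : Prop :=
  ∃ (l r : List E.E) (e f f' e' : E.E),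
    x = l ++ e :: f :: r ∧ y = l ++ f' :: e' :: r ∧ CRel E C e f f' e'

/-- The relation on finite paths generating the equivalence `∼`. -/
def PathRel (E : ColouredGraph k) (C : Set (MorphOf E)) (x y : FinPath E) : Prop :=
  x.rng = y.rng ∧ SwapStep E C x.edges y.edges


/-- `IsLamEC E C Λ` says that the `k`-graph structure `Λ` on vertices `E.V` and
morphisms the `C`-compatible coloured-graph morphisms from grids into `E`
has the structure maps of `Λ_{(E,C)}`: degree `d(λ) = m`, range `λ(0)`,
source `λ(d(λ))`, identities of degree `0`, and composition characterised by
its restrictions. -/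
def IsLamEC (E : ColouredGraph k) (C : Set (MorphOf E))
    (Λ : KGraph k E.V {φ : MorphOf E // CComp E C φ.2}) : Prop :=
  (∀ φ, Λ.d φ = φ.1.1) ∧
  (∀ φ, Λ.rng φ = gRng φ.1.2) ∧
  (∀ φ, Λ.src φ = gSrc φ.1.2) ∧
  (∀ v : E.V, (Λ.idm v).1.1 = (0 : Fin k → ℕ) ∧ gRng (Λ.idm v).1.2 = v) ∧
  (∀ φ ψ, Λ.src φ = Λ.rng ψ →
    (Λ.comp φ ψ).1.1 = φ.1.1 + ψ.1.1 ∧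
    ∃ (h1 : (0 : Fin k → ℕ) + φ.1.1 ≤ (Λ.comp φ ψ).1.1)
      (h2 : φ.1.1 + ψ.1.1 ≤ (Λ.comp φ ψ).1.1),
      (⟨φ.1.1, restrictTo (Λ.comp φ ψ).1.2 0 φ.1.1 h1⟩ : MorphOf E) = φ.1 ∧
      (⟨ψ.1.1, restrictTo (Λ.comp φ ψ).1.2 φ.1.1 ψ.1.1 h2⟩ : MorphOf E) = ψ.1)

/-- The skeleton of a `k`-graph: vertices are the objects and edges are the
morphisms of degree `e_i`, coloured by `i`. -/
noncomputable def skel {O H : Type} (Λ : KGraph k O H) : ColouredGraph k where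
  V := O
  E := {h : H // ∃ i : Fin k, Λ.d h = Pi.single i 1}
  r e := Λ.rng e.1
  s e := Λ.src e.1
  c e := Classical.choose e.2

/-- The collection `C_Λ` of commuting squares of a `k`-graph: the squares
`φ_λ` for `λ ∈ Λ^{e_i+e_j}` (`i ≠ j`), given on vertices by `φ_λ(n) = λ(n)`
and on edges by `φ_λ(n + v_l) = λ(n, n + e_l)`. -/
noncomputable def skelSquares {O H : Type} (Λ : KGraph k O H) :
    Set (MorphOf (skel Λ)) :=
  {ψ | ∃ (i j : Fin k), i ≠ j ∧ ∃ lam : H,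
    Λ.d lam = Pi.single i 1 + Pi.single j 1 ∧
    ψ.1 = Pi.single i 1 + Pi.single j 1 ∧
    (∀ (n : Fin k → ℕ) (hn : n ≤ ψ.1), ∃ a : H,
      IsSegment Λ lam a 0 n ∧ ψ.2.onV ⟨n, hn⟩ = Λ.src a) ∧
    (∀ (n : Fin k → ℕ) (l : Fin k) (hn : n + Pi.single l 1 ≤ ψ.1),
      IsSegment Λ lam (ψ.2.onE ⟨(n, l), hn⟩).1 n (n + Pi.single l 1))}


/-! ### Auxiliary: segment calculus for `k`-graphs -/

section SegCalc

variable {k : ℕ} {O H : Type} (Γ : KGraph k O H)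

lemma pile {p q : Fin k → ℕ} (h : p ≤ q) (i : Fin k) : p i ≤ q i := h i

lemma pi_sub_add {p q : Fin k → ℕ} (h : p ≤ q) : p + (q - p) = q := by
  funext i; have h2 : p i ≤ q i := h i
  simp only [Pi.add_apply, Pi.sub_apply]; omega

/-- The first factor of `γ` at degree `n`. -/
noncomputable def KGraph.fst (γ : H) (n : Fin k → ℕ) (hn : n ≤ Γ.d γ) : H :=
  (Γ.factor γ n (Γ.d γ - n) (pi_sub_add hn).symm).choose.1

/-- The second factor of `γ` at degree `n`. -/
noncomputable def KGraph.snd (γ : H) (n : Fin k → ℕ) (hn : n ≤ Γ.d γ) : H :=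
  (Γ.factor γ n (Γ.d γ - n) (pi_sub_add hn).symm).choose.2

lemma KGraph.fst_snd_spec (γ : H) (n : Fin k → ℕ) (hn : n ≤ Γ.d γ) :
    Γ.src (Γ.fst γ n hn) = Γ.rng (Γ.snd γ n hn) ∧
    Γ.comp (Γ.fst γ n hn) (Γ.snd γ n hn) = γ ∧
    Γ.d (Γ.fst γ n hn) = n ∧ Γ.d (Γ.snd γ n hn) = Γ.d γ - n :=
  (Γ.factor γ n (Γ.d γ - n) (pi_sub_add hn).symm).choose_spec.1

lemma KGraph.src_fst (γ : H) (n : Fin k → ℕ) (hn : n ≤ Γ.d γ) :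
    Γ.src (Γ.fst γ n hn) = Γ.rng (Γ.snd γ n hn) := (Γ.fst_snd_spec γ n hn).1

lemma KGraph.comp_fst_snd (γ : H) (n : Fin k → ℕ) (hn : n ≤ Γ.d γ) :
    Γ.comp (Γ.fst γ n hn) (Γ.snd γ n hn) = γ := (Γ.fst_snd_spec γ n hn).2.1

lemma KGraph.d_fst (γ : H) (n : Fin k → ℕ) (hn : n ≤ Γ.d γ) :
    Γ.d (Γ.fst γ n hn) = n := (Γ.fst_snd_spec γ n hn).2.2.1

lemma KGraph.d_snd (γ : H) (n : Fin k → ℕ) (hn : n ≤ Γ.d γ) :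
    Γ.d (Γ.snd γ n hn) = Γ.d γ - n := (Γ.fst_snd_spec γ n hn).2.2.2

/-- Uniqueness of factorisations. -/
lemma KGraph.factor_eq (γ : H) (n : Fin k → ℕ) (hn : n ≤ Γ.d γ) (a b : H)
    (hab : Γ.src a = Γ.rng b) (hc : Γ.comp a b = γ) (hd : Γ.d a = n) :
    a = Γ.fst γ n hn ∧ b = Γ.snd γ n hn := by
  have hdb : Γ.d b = Γ.d γ - n := by
    have h2 := Γ.d_comp a b hab
    rw [hc, hd] at h2
    funext i
    have h3 := congrFun h2 i
    simp only [Pi.add_apply] at h3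
    simp only [Pi.sub_apply]
    omega
  have h4 := (Γ.factor γ n (Γ.d γ - n) (pi_sub_add hn).symm).choose_spec.2
    (a, b) ⟨hab, hc, hd, hdb⟩
  exact ⟨congrArg Prod.fst h4, congrArg Prod.snd h4⟩

lemma KGraph.rng_fst (γ : H) (n : Fin k → ℕ) (hn : n ≤ Γ.d γ) :
    Γ.rng (Γ.fst γ n hn) = Γ.rng γ := by
  conv_rhs => rw [← Γ.comp_fst_snd γ n hn]
  rw [Γ.rng_comp _ _ (Γ.src_fst γ n hn)]

lemma KGraph.src_snd (γ : H) (n : Fin k → ℕ) (hn : n ≤ Γ.d γ) :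
    Γ.src (Γ.snd γ n hn) = Γ.src γ := by
  conv_rhs => rw [← Γ.comp_fst_snd γ n hn]
  rw [Γ.src_comp _ _ (Γ.src_fst γ n hn)]

lemma KGraph.fst_zero (γ : H) (h0 : (0 : Fin k → ℕ) ≤ Γ.d γ) :
    Γ.fst γ 0 h0 = Γ.idm (Γ.rng γ) :=
  ((Γ.factor_eq γ 0 h0 (Γ.idm (Γ.rng γ)) γ
    (by rw [Γ.src_idm]) (Γ.idm_comp γ) (Γ.d_idm _)).1).symm

lemma KGraph.snd_zero (γ : H) (h0 : (0 : Fin k → ℕ) ≤ Γ.d γ) :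
    Γ.snd γ 0 h0 = γ :=
  ((Γ.factor_eq γ 0 h0 (Γ.idm (Γ.rng γ)) γ
    (by rw [Γ.src_idm]) (Γ.idm_comp γ) (Γ.d_idm _)).2).symm

lemma KGraph.fst_top (γ : H) : Γ.fst γ (Γ.d γ) le_rfl = γ :=
  ((Γ.factor_eq γ (Γ.d γ) le_rfl γ (Γ.idm (Γ.src γ))
    (by rw [Γ.rng_idm]) (Γ.comp_idm γ) rfl).1).symm

lemma KGraph.snd_top (γ : H) : Γ.snd γ (Γ.d γ) le_rfl = Γ.idm (Γ.src γ) :=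
  ((Γ.factor_eq γ (Γ.d γ) le_rfl γ (Γ.idm (Γ.src γ))
    (by rw [Γ.rng_idm]) (Γ.comp_idm γ) rfl).2).symm

lemma KGraph.eq_idm_of_d_zero (a : H) (h : Γ.d a = 0) : a = Γ.idm (Γ.rng a) := by
  have h0 : (0 : Fin k → ℕ) ≤ Γ.d a := by rw [h]
  have h1 := Γ.fst_zero a h0
  rw [← h1]
  exact ((Γ.factor_eq a 0 h0 a (Γ.idm (Γ.src a))
    (by rw [Γ.rng_idm]) (Γ.comp_idm a) h).1)

lemma KGraph.src_eq_rng_of_d_zero (a : H) (h : Γ.d a = 0) : Γ.src a = Γ.rng a := by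
  conv_lhs => rw [Γ.eq_idm_of_d_zero a h]
  rw [Γ.src_idm]

/-- The segment of `γ` between `p` and `q`. -/
noncomputable def KGraph.seg (γ : H) (p q : Fin k → ℕ) (hpq : p ≤ q) (hq : q ≤ Γ.d γ) : H :=
  Γ.fst (Γ.snd γ p (le_trans hpq hq)) (q - p)
    (by rw [Γ.d_snd]
        intro i
        have h1 : p i ≤ q i := hpq i
        have h2 : q i ≤ Γ.d γ i := hq i
        simp only [Pi.sub_apply]; omega)

lemma KGraph.d_seg (γ : H) (p q : Fin k → ℕ) (hpq : p ≤ q) (hq : q ≤ Γ.d γ) :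
    Γ.d (Γ.seg γ p q hpq hq) = q - p := Γ.d_fst _ _ _

/-- The triple-factorisation property of a segment. -/
lemma KGraph.seg_spec (γ : H) (p q : Fin k → ℕ) (hpq : p ≤ q) (hq : q ≤ Γ.d γ) :
    IsSegment Γ γ (Γ.seg γ p q hpq hq) p q := by
  have hp : p ≤ Γ.d γ := le_trans hpq hq
  have hb : q - p ≤ Γ.d (Γ.snd γ p hp) := by
    rw [Γ.d_snd]
    intro i
    have h1 : p i ≤ q i := hpq i
    have h2 : q i ≤ Γ.d γ i := hq i
    simp only [Pi.sub_apply]; omega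
  refine ⟨Γ.fst γ p hp, Γ.snd (Γ.snd γ p hp) (q - p) hb, ?_, ?_, ?_,
    Γ.d_fst γ p hp, Γ.d_seg γ p q hpq hq⟩
  · rw [Γ.src_fst γ p hp]
    exact (Γ.rng_fst (Γ.snd γ p hp) (q - p) hb).symm
  · exact Γ.src_fst (Γ.snd γ p hp) (q - p) hb
  · show Γ.comp (Γ.fst γ p hp)
      (Γ.comp (Γ.fst (Γ.snd γ p hp) (q-p) hb) (Γ.snd (Γ.snd γ p hp) (q - p) hb)) = γ
    rw [Γ.comp_fst_snd (Γ.snd γ p hp) (q - p) hb, Γ.comp_fst_snd γ p hp]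

/-- Uniqueness of segments. -/
lemma KGraph.seg_unique (γ : H) (p q : Fin k → ℕ) (hpq : p ≤ q) (hq : q ≤ Γ.d γ)
    (a s b : H) (h1 : Γ.src a = Γ.rng s) (h2 : Γ.src s = Γ.rng b)
    (h3 : Γ.comp a (Γ.comp s b) = γ) (h4 : Γ.d a = p) (h5 : Γ.d s = q - p) :
    s = Γ.seg γ p q hpq hq := by
  have hp : p ≤ Γ.d γ := le_trans hpq hq
  have hcab : Γ.src a = Γ.rng (Γ.comp s b) := by rw [Γ.rng_comp s b h2]; exact h1
  obtain ⟨ha, hrest⟩ := Γ.factor_eq γ p hp a (Γ.comp s b) hcab h3 h4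
  have hb : q - p ≤ Γ.d (Γ.snd γ p hp) := by
    rw [Γ.d_snd]
    intro i
    have ha1 : p i ≤ q i := hpq i
    have ha2 : q i ≤ Γ.d γ i := hq i
    simp only [Pi.sub_apply]; omega
  exact (Γ.factor_eq (Γ.snd γ p hp) (q - p) hb s b h2 hrest h5).1

lemma KGraph.seg_congr (γ : H) {p q p' q' : Fin k → ℕ} (hp : p = p') (hq0 : q = q')
    (hpq : p ≤ q) (hq : q ≤ Γ.d γ) :
    Γ.seg γ p q hpq hq = Γ.seg γ p' q' (hp ▸ hq0 ▸ hpq) (hq0 ▸ hq) := by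
  subst hp; subst hq0; rfl

lemma KGraph.fst_congr {γ γ' : H} (h : γ = γ') {n n' : Fin k → ℕ} (hn0 : n = n')
    (hn : n ≤ Γ.d γ) : Γ.fst γ n hn = Γ.fst γ' n' (h ▸ hn0 ▸ hn) := by
  subst h; subst hn0; rfl

lemma KGraph.seg_zero (γ : H) (q : Fin k → ℕ) (h0 : (0:Fin k → ℕ) ≤ q) (hq : q ≤ Γ.d γ) :
    Γ.seg γ 0 q h0 hq = Γ.fst γ q hq := by
  refine (Γ.seg_unique γ 0 q h0 hq (Γ.idm (Γ.rng γ)) (Γ.fst γ q hq) (Γ.snd γ q hq)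
    ?_ (Γ.src_fst γ q hq) ?_ (Γ.d_idm _) ?_).symm
  · rw [Γ.src_idm, Γ.rng_fst]
  · rw [Γ.comp_fst_snd γ q hq]
    exact Γ.idm_comp γ
  · rw [Γ.d_fst]; funext i; simp

lemma KGraph.seg_top (γ : H) (p : Fin k → ℕ) (hp : p ≤ Γ.d γ) :
    Γ.seg γ p (Γ.d γ) hp le_rfl = Γ.snd γ p hp := by
  refine (Γ.seg_unique γ p (Γ.d γ) hp le_rfl (Γ.fst γ p hp) (Γ.snd γ p hp)
    (Γ.idm (Γ.src (Γ.snd γ p hp))) (Γ.src_fst γ p hp) ?_ ?_ (Γ.d_fst γ p hp)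
    (Γ.d_snd γ p hp)).symm
  · rw [Γ.rng_idm]
  · rw [Γ.comp_idm, Γ.comp_fst_snd]

/-- `fst γ q = fst γ p ⬝ seg γ p q`. -/
lemma KGraph.fst_comp_seg (γ : H) (p q : Fin k → ℕ) (hpq : p ≤ q) (hq : q ≤ Γ.d γ) :
    Γ.fst γ q hq = Γ.comp (Γ.fst γ p (le_trans hpq hq)) (Γ.seg γ p q hpq hq) := by
  obtain ⟨a, b, ha1, ha2, ha3, ha4, ha5⟩ := Γ.seg_spec γ p q hpq hq
  have hp : p ≤ Γ.d γ := le_trans hpq hq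
  have hcab : Γ.src a = Γ.rng (Γ.comp (Γ.seg γ p q hpq hq) b) := by
    rw [Γ.rng_comp _ b ha2]; exact ha1
  have hfa : a = Γ.fst γ p hp := (Γ.factor_eq γ p hp a _ hcab ha3 ha4).1
  have has : Γ.src (Γ.comp a (Γ.seg γ p q hpq hq)) = Γ.rng b := by
    rw [Γ.src_comp a _ ha1]; exact ha2
  have hc : Γ.comp (Γ.comp a (Γ.seg γ p q hpq hq)) b = γ := by
    rw [Γ.comp_assoc a _ b ha1 ha2]; exact ha3
  have hd : Γ.d (Γ.comp a (Γ.seg γ p q hpq hq)) = q := by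
    rw [Γ.d_comp a _ ha1, ha4, ha5]
    funext i
    have h1 : p i ≤ q i := hpq i
    simp only [Pi.add_apply, Pi.sub_apply]; omega
  have h2 := (Γ.factor_eq γ q hq (Γ.comp a (Γ.seg γ p q hpq hq)) b has hc hd).1
  rw [← h2, hfa]

lemma KGraph.src_seg (γ : H) (p q : Fin k → ℕ) (hpq : p ≤ q) (hq : q ≤ Γ.d γ) :
    Γ.src (Γ.seg γ p q hpq hq) = Γ.src (Γ.fst γ q hq) := by
  rw [Γ.fst_comp_seg γ p q hpq hq]
  obtain ⟨a, b, ha1, ha2, ha3, ha4, ha5⟩ := Γ.seg_spec γ p q hpq hq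
  rw [Γ.src_comp]
  rw [Γ.src_fst γ p (le_trans hpq hq)]
  obtain ⟨hf, hrest⟩ := Γ.factor_eq γ p (le_trans hpq hq) a
    (Γ.comp (Γ.seg γ p q hpq hq) b)
    (by rw [Γ.rng_comp _ b ha2]; exact ha1) ha3 ha4
  rw [← hrest, Γ.rng_comp _ b ha2]

lemma KGraph.rng_seg (γ : H) (p q : Fin k → ℕ) (hpq : p ≤ q) (hq : q ≤ Γ.d γ) :
    Γ.rng (Γ.seg γ p q hpq hq) = Γ.src (Γ.fst γ p (le_trans hpq hq)) := by
  obtain ⟨a, b, ha1, ha2, ha3, ha4, ha5⟩ := Γ.seg_spec γ p q hpq hq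
  obtain ⟨hf, hrest⟩ := Γ.factor_eq γ p (le_trans hpq hq) a
    (Γ.comp (Γ.seg γ p q hpq hq) b)
    (by rw [Γ.rng_comp _ b ha2]; exact ha1) ha3 ha4
  rw [← ha1, hf]

/-- Segments of segments are segments. -/
lemma KGraph.seg_of_seg (γ : H) (p q a b : Fin k → ℕ) (hpq : p ≤ q) (hq : q ≤ Γ.d γ)
    (hab : a ≤ b) (hb : b ≤ q - p) :
    Γ.seg (Γ.seg γ p q hpq hq) a b hab (by rw [Γ.d_seg]; exact hb) =
      Γ.seg γ (p + a) (p + b) (add_le_add_right hab p)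
        (by intro i
            have h1 : b i ≤ q i - p i := hb i
            have h2 : q i ≤ Γ.d γ i := hq i
            have h3 : p i ≤ q i := hpq i
            simp only [Pi.add_apply]; omega) := by
  obtain ⟨F, G, hF1, hF2, hF3, hF4, hF5⟩ := Γ.seg_spec γ p q hpq hq
  obtain ⟨A, B, hA1, hA2, hA3, hA4, hA5⟩ :=
    Γ.seg_spec (Γ.seg γ p q hpq hq) a b hab (by rw [Γ.d_seg]; exact hb)
  generalize hSdef : Γ.seg (Γ.seg γ p q hpq hq) a b hab (by rw [Γ.d_seg]; exact hb) = S at hA1 hA2 hA3 hA5 ⊢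
  have hA_SB : Γ.src A = Γ.rng (Γ.comp S B) := by rw [Γ.rng_comp S B hA2]; exact hA1
  have hB_G : Γ.src B = Γ.rng G := by
    rw [← hA3, Γ.src_comp A _ hA_SB, Γ.src_comp S B hA2] at hF2
    exact hF2
  have hSB_G : Γ.src (Γ.comp S B) = Γ.rng G := by
    rw [Γ.src_comp S B hA2]; exact hB_G
  have hS_BG : Γ.src S = Γ.rng (Γ.comp B G) := by
    rw [Γ.rng_comp B G hB_G]; exact hA2
  have e1 : Γ.comp (Γ.comp A (Γ.comp S B)) G = Γ.comp A (Γ.comp S (Γ.comp B G)) := by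
    rw [Γ.comp_assoc A (Γ.comp S B) G hA_SB hSB_G]
    rw [Γ.comp_assoc S B G hA2 hB_G]
  have hF_A : Γ.src F = Γ.rng A := by
    rw [hF1, ← hA3, Γ.rng_comp A _ hA_SB]
  have e2 : γ = Γ.comp (Γ.comp F A) (Γ.comp S (Γ.comp B G)) := by
    rw [Γ.comp_assoc F A (Γ.comp S (Γ.comp B G)) hF_A
      (by rw [Γ.rng_comp S _ hS_BG]; exact hA1)]
    rw [← e1, hA3]; exact hF3.symm
  refine Γ.seg_unique γ (p+a) (p+b) _ _ (Γ.comp F A) S (Γ.comp B G)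
    ?_ hS_BG e2.symm ?_ ?_
  · rw [Γ.src_comp F A hF_A]; exact hA1
  · rw [Γ.d_comp F A hF_A, hF4, hA4]
  · rw [hA5]
    funext i
    have h3 : p i ≤ q i := hpq i
    simp only [Pi.sub_apply, Pi.add_apply]; omega

lemma KGraph.seg_congr_hom {γ γ' : H} (h : γ = γ') (p q : Fin k → ℕ) (hpq : p ≤ q)
    (hq : q ≤ Γ.d γ) : Γ.seg γ p q hpq hq = Γ.seg γ' p q hpq (h ▸ hq) := by
  subst h; rfl

lemma KGraph.snd_seg (γ : H) (p a b : Fin k → ℕ) (hab : a ≤ b)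
    (hp : p ≤ Γ.d γ) (hb : b ≤ Γ.d γ - p) :
    Γ.seg (Γ.snd γ p hp) a b hab (by rw [Γ.d_snd]; exact hb) =
      Γ.seg γ (p + a) (p + b) (add_le_add_right hab p)
        (by intro i
            have h1 : b i ≤ Γ.d γ i - p i := hb i
            have h2 : p i ≤ Γ.d γ i := hp i
            simp only [Pi.add_apply]; omega) := by
  have h1 : Γ.seg γ p (Γ.d γ) hp le_rfl = Γ.snd γ p hp := Γ.seg_top γ p hp
  exact (Γ.seg_congr_hom h1.symm a b hab _).trans
    (Γ.seg_of_seg γ p (Γ.d γ) a b hp le_rfl hab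
      (by rw [← Γ.d_snd γ p hp, ← h1, Γ.d_seg] at hb; exact hb))

end SegCalc

/-! ### Auxiliary: grid morphisms associated to morphisms of a `k`-graph -/

section Theta

variable {k : ℕ} {O H : Type} (Γ : KGraph k O H)

lemma single_idx_inj {i j : Fin k} (h : (Pi.single i 1 : Fin k → ℕ) = Pi.single j 1) :
    i = j := by
  by_contra hne
  have h2 := congrFun h i
  rw [Pi.single_eq_same, Pi.single_eq_of_ne hne] at h2
  exact one_ne_zero h2

lemma pi_le_add_right (p q : Fin k → ℕ) : p ≤ p + q :=
  le_add_of_nonneg_right zero_le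

lemma pi_add_sub_cancel (p q : Fin k → ℕ) : (p + q) - p = q := by
  funext i; simp only [Pi.sub_apply, Pi.add_apply]; omega

lemma skel_c (a : H) (h2 : ∃ i : Fin k, Γ.d a = Pi.single i 1) (i : Fin k)
    (ha : Γ.d a = Pi.single i 1) : (skel Γ).c ⟨a, h2⟩ = i := by
  have hs := Classical.choose_spec h2
  show Classical.choose h2 = i
  exact single_idx_inj (by rw [← hs, ha])

/-- The edge of the skeleton given by a segment of degree `e_i`. -/
noncomputable def KGraph.segE (γ : H) (n : Fin k → ℕ) (i : Fin k)
    (h : n + Pi.single i 1 ≤ Γ.d γ) : (skel Γ).E :=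
  ⟨Γ.seg γ n (n + Pi.single i 1) (pi_le_add_right n _) h,
    ⟨i, by rw [Γ.d_seg]; exact pi_add_sub_cancel n _⟩⟩

lemma KGraph.d_segE (γ : H) (n : Fin k → ℕ) (i : Fin k)
    (h : n + Pi.single i 1 ≤ Γ.d γ) : Γ.d (Γ.segE γ n i h).1 = Pi.single i 1 :=
  (Γ.d_seg γ n (n + Pi.single i 1) (pi_le_add_right n _) h).trans (pi_add_sub_cancel n _)

/-- The canonical coloured-graph morphism from the grid of degree `d γ` into the
skeleton, induced by `γ`. -/
noncomputable def KGraph.skelCGM (γ : H) (m : Fin k → ℕ) (hm : Γ.d γ = m) :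
    CGM (grid k m) (skel Γ) where
  onV x := Γ.src (Γ.fst γ x.1 (x.2.trans_eq hm.symm))
  onE e := Γ.segE γ e.1.1 e.1.2 (e.2.trans_eq hm.symm)
  r_comm e := Γ.rng_seg γ e.1.1 (e.1.1 + Pi.single e.1.2 1) (pi_le_add_right _ _)
    (e.2.trans_eq hm.symm)
  s_comm e := Γ.src_seg γ e.1.1 (e.1.1 + Pi.single e.1.2 1) (pi_le_add_right _ _)
    (e.2.trans_eq hm.symm)
  c_comm e := skel_c Γ _ _ e.1.2 (Γ.d_segE γ e.1.1 e.1.2 (e.2.trans_eq hm.symm))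

lemma CGM.ext {E F : ColouredGraph k} {f g : CGM E F}
    (h1 : f.onV = g.onV) (h2 : f.onE = g.onE) : f = g := by
  cases f; cases g
  cases h1; cases h2
  rfl

lemma restrict_compose {M : Fin k → ℕ} {E F : ColouredGraph k} (g : CGM F E)
    (f : CGM (grid k M) F) (p q : Fin k → ℕ) (h : p + q ≤ M) :
    restrictTo (g.compose f) p q h = g.compose (restrictTo f p q h) :=
  CGM.ext rfl rfl

/-- `fst` of a segment. -/
lemma KGraph.fst_of_seg (γ : H) (p q n : Fin k → ℕ) (hpq : p ≤ q) (hq : q ≤ Γ.d γ)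
    (hn : n ≤ q - p) :
    Γ.fst (Γ.seg γ p q hpq hq) n (by rw [Γ.d_seg]; exact hn) =
      Γ.seg γ p (p + n) (pi_le_add_right p n)
        (by intro i
            have h1 : n i ≤ q i - p i := hn i
            have h2 : q i ≤ Γ.d γ i := hq i
            have h3 : p i ≤ q i := hpq i
            simp only [Pi.add_apply]; omega) := by
  rw [← Γ.seg_zero (Γ.seg γ p q hpq hq) n zero_le (by rw [Γ.d_seg]; exact hn)]
  exact (Γ.seg_of_seg γ p q 0 n hpq hq zero_le hn).trans
    (Γ.seg_congr γ (add_zero p) rfl _ _)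

lemma KGraph.skelCGM_restrict (γ : H) (m : Fin k → ℕ) (hm : Γ.d γ = m)
    (p q : Fin k → ℕ) (h : p + q ≤ m) :
    restrictTo (Γ.skelCGM γ m hm) p q h =
      Γ.skelCGM (Γ.seg γ p (p + q) (pi_le_add_right p q) (h.trans_eq hm.symm)) q
        (by rw [Γ.d_seg]; exact pi_add_sub_cancel p q) := by
  have hq' : p + q ≤ Γ.d γ := h.trans_eq hm.symm
  refine CGM.ext ?_ ?_
  · funext x
    have e1 := Γ.fst_of_seg γ p (p+q) x.1 (pi_le_add_right p q) hq'
      (by rw [pi_add_sub_cancel]; exact x.2)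
    show Γ.src (Γ.fst γ (p + x.1) ((add_le_add_right x.2 p |>.trans h).trans_eq hm.symm)) =
      Γ.src (Γ.fst (Γ.seg γ p (p+q) (pi_le_add_right p q) hq') x.1
            (by rw [Γ.d_seg]; rw [pi_add_sub_cancel]; exact x.2))
    rw [e1, Γ.src_seg]
  · funext e
    apply Subtype.ext
    have e1 := Γ.seg_of_seg γ p (p+q) e.1.1 (e.1.1 + Pi.single e.1.2 1)
      (pi_le_add_right p q) hq' (pi_le_add_right _ _)
      (by rw [pi_add_sub_cancel]; exact e.2)
    calc ((restrictTo (Γ.skelCGM γ m hm) p q h).onE e).1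
        = Γ.seg γ (p + e.1.1) (p + e.1.1 + Pi.single e.1.2 1) (pi_le_add_right _ _)
            (by rw [add_assoc]; exact (add_le_add_right e.2 p |>.trans h).trans_eq hm.symm) := rfl
      _ = Γ.seg γ (p + e.1.1) (p + (e.1.1 + Pi.single e.1.2 1))
            (by rw [← add_assoc]; exact pi_le_add_right _ _)
            (by exact (add_le_add_right e.2 p |>.trans h).trans_eq hm.symm) := by
            exact Γ.seg_congr γ rfl (add_assoc p e.1.1 _) _ _
      _ = Γ.seg (Γ.seg γ p (p+q) (pi_le_add_right p q) hq') e.1.1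
            (e.1.1 + Pi.single e.1.2 1) (pi_le_add_right _ _)
            (by rw [Γ.d_seg, pi_add_sub_cancel]; exact e.2) := by rw [e1]
      _ = _ := rfl

lemma isSegment_fst (γ : H) (n : Fin k → ℕ) (hn : n ≤ Γ.d γ) :
    IsSegment Γ γ (Γ.fst γ n hn) 0 n := by
  rw [← Γ.seg_zero γ n zero_le hn]
  exact Γ.seg_spec γ 0 n zero_le hn

lemma skelCGM_mem_squares (lam : H) (i j : Fin k) (hij : i ≠ j)
    (hd : Γ.d lam = Pi.single i 1 + Pi.single j 1) :
    (⟨Pi.single i 1 + Pi.single j 1,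
      Γ.skelCGM lam (Pi.single i 1 + Pi.single j 1) hd⟩ : MorphOf (skel Γ)) ∈
      skelSquares Γ := by
  refine ⟨i, j, hij, lam, hd, rfl, ?_, ?_⟩
  · intro n hn
    exact ⟨Γ.fst lam n (hn.trans_eq hd.symm), isSegment_fst Γ lam n _, rfl⟩
  · intro n l hn
    exact Γ.seg_spec lam n (n + Pi.single l 1) (pi_le_add_right n _) (hn.trans_eq hd.symm)

variable (E : ColouredGraph k) (ψ : CGM (skel Γ) E)

/-- The grid morphism `θ_γ` into `E`. -/
noncomputable def thetaCGM (γ : H) (m : Fin k → ℕ) (hm : Γ.d γ = m) : CGM (grid k m) E :=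
  ψ.compose (Γ.skelCGM γ m hm)

/-- The bundled grid morphism `θ_γ`. -/
noncomputable def thetaM (γ : H) : MorphOf E := ⟨Γ.d γ, thetaCGM Γ E ψ γ (Γ.d γ) rfl⟩

lemma thetaM_eq (γ : H) (m : Fin k → ℕ) (hm : Γ.d γ = m) :
    thetaM Γ E ψ γ = ⟨m, thetaCGM Γ E ψ γ m hm⟩ := by subst hm; rfl

lemma MorphOf.onV_congr {E : ColouredGraph k} {x y : MorphOf E} (h : x = y)
    (n : Fin k → ℕ) (hx : n ≤ x.1) :
    x.2.onV ⟨n, hx⟩ = y.2.onV ⟨n, h ▸ hx⟩ := by subst h; rfl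

lemma MorphOf.onE_congr {E : ColouredGraph k} {x y : MorphOf E} (h : x = y)
    (n : Fin k → ℕ) (l : Fin k) (hx : n + Pi.single l 1 ≤ x.1) :
    x.2.onE ⟨(n, l), hx⟩ = y.2.onE ⟨(n, l), h ▸ hx⟩ := by subst h; rfl

lemma sigma_snd_eq {E : ColouredGraph k} {m : Fin k → ℕ} {f g : CGM (grid k m) E}
    (h : (⟨m, f⟩ : MorphOf E) = ⟨m, g⟩) : f = g := by
  have h2 : HEq f g := (Sigma.mk.inj_iff.mp h).2
  exact eq_of_heq h2

lemma gridV_eq {m : Fin k → ℕ} {a b : Fin k → ℕ} (h : a = b) (ha : a ≤ m) :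
    (⟨a, ha⟩ : (grid k m).V) = ⟨b, h ▸ ha⟩ := by subst h; rfl

lemma gridE_eq {m : Fin k → ℕ} {a b : Fin k → ℕ} {l : Fin k} (h : a = b)
    (ha : a + Pi.single l 1 ≤ m) :
    (⟨(a, l), ha⟩ : (grid k m).E) = ⟨(b, l), h ▸ ha⟩ := by subst h; rfl

lemma theta_restrict (γ : H) (m : Fin k → ℕ) (hm : Γ.d γ = m)
    (p q : Fin k → ℕ) (h : p + q ≤ m) :
    restrictTo (thetaCGM Γ E ψ γ m hm) p q h =
      thetaCGM Γ E ψ (Γ.seg γ p (p + q) (pi_le_add_right p q) (h.trans_eq hm.symm)) q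
        (by rw [Γ.d_seg]; exact pi_add_sub_cancel p q) := by
  show restrictTo (ψ.compose (Γ.skelCGM γ m hm)) p q h = _
  rw [restrict_compose, Γ.skelCGM_restrict γ m hm p q h]
  rfl

lemma theta_ccomp {C : Set (MorphOf E)}
    (hsq : ∀ φ ∈ skelSquares Γ, (⟨φ.1, ψ.compose φ.2⟩ : MorphOf E) ∈ C)
    (γ : H) (m : Fin k → ℕ) (hm : Γ.d γ = m) : CComp E C (thetaCGM Γ E ψ γ m hm) := by
  intro p i j hij h
  rw [theta_restrict Γ E ψ γ m hm p (Pi.single i 1 + Pi.single j 1) h]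
  have hmem := skelCGM_mem_squares Γ
    (Γ.seg γ p (p + (Pi.single i 1 + Pi.single j 1)) (pi_le_add_right _ _)
      (h.trans_eq hm.symm)) i j hij
    (by rw [Γ.d_seg]; exact pi_add_sub_cancel _ _)
  exact hsq _ hmem

lemma KGraph.fst_snd {k : ℕ} {O H : Type} (Γ : KGraph k O H) (γ : H) (p n : Fin k → ℕ)
    (hp : p ≤ Γ.d γ) (hn : n ≤ Γ.d γ - p) :
    Γ.fst (Γ.snd γ p hp) n (by rw [Γ.d_snd]; exact hn) =
      Γ.seg γ p (p + n) (pi_le_add_right p n)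
        (by intro r
            have h1 : n r ≤ (Γ.d γ - p : Fin k → ℕ) r := hn r
            have h2 : p r ≤ Γ.d γ r := hp r
            simp only [Pi.add_apply, Pi.sub_apply] at h1 ⊢
            omega) := by
  rw [← Γ.seg_zero (Γ.snd γ p hp) n zero_le (by rw [Γ.d_snd]; exact hn)]
  exact (Γ.snd_seg γ p 0 n zero_le hp hn).trans (Γ.seg_congr γ (add_zero p) rfl _ _)

end Theta

/-! ### Auxiliary: injectivity of `θ` -/

section Inj

variable {k : ℕ} {O H : Type} (Γ : KGraph k O H)

lemma single_le {m : Fin k → ℕ} {i : Fin k} (h : 1 ≤ m i) : Pi.single i 1 ≤ m := by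
  intro j
  rcases eq_or_ne j i with rfl | hne
  · rwa [Pi.single_eq_same]
  · rw [Pi.single_eq_of_ne hne]; exact zero_le

lemma sum_sub_single_lt {m : Fin k → ℕ} {i : Fin k} (h : 1 ≤ m i) :
    (∑ j, (m - Pi.single i 1 : Fin k → ℕ) j) < ∑ j, m j := by
  apply Finset.sum_lt_sum
  · intro j _
    simp only [Pi.sub_apply]
    exact Nat.sub_le _ _
  · refine ⟨i, Finset.mem_univ i, ?_⟩
    simp only [Pi.sub_apply, Pi.single_eq_same]
    omega

lemma KGraph.hom_ext_aux : ∀ N (γ γ' : H), (∑ i, Γ.d γ i) = N → Γ.d γ = Γ.d γ' →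
    Γ.rng γ = Γ.rng γ' →
    (∀ (n : Fin k → ℕ) (l : Fin k) (hb : n + Pi.single l 1 ≤ Γ.d γ)
      (hb' : n + Pi.single l 1 ≤ Γ.d γ'),
      Γ.seg γ n (n + Pi.single l 1) (pi_le_add_right n _) hb =
        Γ.seg γ' n (n + Pi.single l 1) (pi_le_add_right n _) hb') → γ = γ' := by
  intro N
  induction N using Nat.strong_induction_on with
  | _ N IH =>
  intro γ γ' hN hd hr hseg
  by_cases hz : Γ.d γ = 0
  · rw [Γ.eq_idm_of_d_zero γ hz, Γ.eq_idm_of_d_zero γ' (hd.symm.trans hz), hr]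
  · have hex : ∃ i, 1 ≤ Γ.d γ i := by
      by_contra hcon
      push_neg at hcon
      exact hz (funext fun i => by have := hcon i; simp only [Pi.zero_apply]; omega)
    obtain ⟨i, hi⟩ := hex
    have hei : Pi.single i 1 ≤ Γ.d γ := single_le hi
    have hei' : Pi.single i 1 ≤ Γ.d γ' := hd ▸ hei
    have hb0 : (0:Fin k → ℕ) + Pi.single i 1 ≤ Γ.d γ := by rwa [zero_add]
    have hb0' : (0:Fin k → ℕ) + Pi.single i 1 ≤ Γ.d γ' := by rwa [zero_add]
    have hfst : Γ.fst γ (Pi.single i 1) hei = Γ.fst γ' (Pi.single i 1) hei' := by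
      have h1 := hseg 0 i hb0 hb0'
      rw [Γ.seg_congr γ rfl (zero_add (Pi.single i 1)) _ _,
        Γ.seg_congr γ' rfl (zero_add (Pi.single i 1)) _ _,
        Γ.seg_zero γ _ zero_le hei, Γ.seg_zero γ' _ zero_le hei'] at h1
      exact h1
    have hdb : Γ.d (Γ.snd γ (Pi.single i 1) hei) = Γ.d (Γ.snd γ' (Pi.single i 1) hei') := by
      rw [Γ.d_snd, Γ.d_snd, hd]
    have hsum : (∑ j, Γ.d (Γ.snd γ (Pi.single i 1) hei) j) < N := by
      rw [Γ.d_snd]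
      calc (∑ j, (Γ.d γ - Pi.single i 1 : Fin k → ℕ) j) < ∑ j, Γ.d γ j := sum_sub_single_lt hi
        _ = N := hN
    have hrb : Γ.rng (Γ.snd γ (Pi.single i 1) hei) = Γ.rng (Γ.snd γ' (Pi.single i 1) hei') := by
      rw [← Γ.src_fst, ← Γ.src_fst, hfst]
    have hsegb : ∀ (n : Fin k → ℕ) (l : Fin k)
        (hb : n + Pi.single l 1 ≤ Γ.d (Γ.snd γ (Pi.single i 1) hei))
        (hb' : n + Pi.single l 1 ≤ Γ.d (Γ.snd γ' (Pi.single i 1) hei')),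
        Γ.seg (Γ.snd γ (Pi.single i 1) hei) n (n + Pi.single l 1) (pi_le_add_right n _) hb =
          Γ.seg (Γ.snd γ' (Pi.single i 1) hei') n (n + Pi.single l 1)
            (pi_le_add_right n _) hb' := by
      intro n l hb hb'
      have hb2 : n + Pi.single l 1 ≤ Γ.d γ - Pi.single i 1 := (Γ.d_snd γ _ hei) ▸ hb
      have hb2' : n + Pi.single l 1 ≤ Γ.d γ' - Pi.single i 1 := (Γ.d_snd γ' _ hei') ▸ hb'
      rw [Γ.snd_seg γ (Pi.single i 1) n (n + Pi.single l 1) (pi_le_add_right n _) hei hb2,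
        Γ.snd_seg γ' (Pi.single i 1) n (n + Pi.single l 1) (pi_le_add_right n _) hei' hb2']
      have hbig : (Pi.single i 1 + n) + Pi.single l 1 ≤ Γ.d γ := by
        intro j
        have u1 := hb2 j
        have u2 : (Pi.single i 1 : Fin k → ℕ) j ≤ Γ.d γ j := hei j
        simp only [Pi.add_apply, Pi.sub_apply] at u1 ⊢
        omega
      have hbig' : (Pi.single i 1 + n) + Pi.single l 1 ≤ Γ.d γ' := hd ▸ hbig
      have h2 := hseg (Pi.single i 1 + n) l hbig hbig'
      rw [Γ.seg_congr γ rfl (add_assoc (Pi.single i 1) n (Pi.single l 1)) _ _,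
        Γ.seg_congr γ' rfl (add_assoc (Pi.single i 1) n (Pi.single l 1)) _ _] at h2
      exact h2
    have hb := IH _ hsum (Γ.snd γ (Pi.single i 1) hei) (Γ.snd γ' (Pi.single i 1) hei')
      rfl hdb hrb hsegb
    rw [← Γ.comp_fst_snd γ (Pi.single i 1) hei, ← Γ.comp_fst_snd γ' (Pi.single i 1) hei',
      hfst, hb]

variable (E : ColouredGraph k) (ψ : CGM (skel Γ) E)

lemma thetaM_inj (hV : Function.Injective ψ.onV) (hE : Function.Injective ψ.onE)
    {γ γ' : H} (h : thetaM Γ E ψ γ = thetaM Γ E ψ γ') : γ = γ' := by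
  have hd : Γ.d γ = Γ.d γ' := congrArg Sigma.fst h
  refine Γ.hom_ext_aux (∑ i, Γ.d γ i) γ γ' rfl hd ?_ ?_
  · have h0 := MorphOf.onV_congr h 0 zero_le
    have h1 : ψ.onV (Γ.src (Γ.fst γ 0 zero_le)) =
        ψ.onV (Γ.src (Γ.fst γ' 0 zero_le)) := h0
    have h2 := hV h1
    rwa [Γ.fst_zero γ zero_le, Γ.fst_zero γ' zero_le, Γ.src_idm, Γ.src_idm] at h2
  · intro n l hb hb'
    have h0 := MorphOf.onE_congr h n l hb
    have h1 : ψ.onE (Γ.segE γ n l hb) = ψ.onE (Γ.segE γ' n l hb') := h0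
    have h2 := hE h1
    exact congrArg Subtype.val h2

end Inj

/-! ### Auxiliary: gluing lemma for `C`-compatible grid morphisms -/

section Glue

variable {k : ℕ} (E : ColouredGraph k) (C : Set (MorphOf E))

lemma exists_pos_of_ne_zero {n : Fin k → ℕ} (h : n ≠ 0) : ∃ l, 1 ≤ n l := by
  by_contra hcon
  push_neg at hcon
  exact h (funext fun l => by have := hcon l; simp only [Pi.zero_apply]; omega)

lemma single_le_add (p : Fin k → ℕ) (i : Fin k) :
    Pi.single i 1 ≤ p + Pi.single i 1 := fun r => Nat.le_add_left _ _

lemma colourVec_pair (e f : E.E) :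
    colourVec E [e, f] = Pi.single (E.c e) 1 + Pi.single (E.c f) 1 := by
  simp [colourVec]

lemma onE_transport {m : Fin k → ℕ} (α : CGM (grid k m) E) {a b : Fin k → ℕ}
    (hab : a = b) (l : Fin k) (ha : a + Pi.single l 1 ≤ m)
    (hb' : b + Pi.single l 1 ≤ m) :
    α.onE ⟨(a, l), ha⟩ = α.onE ⟨(b, l), hb'⟩ := by subst hab; rfl

lemma restrict_eq_onE {m : Fin k → ℕ} {α β : CGM (grid k m) E} {p q : Fin k → ℕ}
    {h : p + q ≤ m} (hres : restrictTo α p q h = restrictTo β p q h)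
    (a : Fin k → ℕ) (l : Fin k) (hal : a + Pi.single l 1 ≤ q)
    (hfull : (p + a) + Pi.single l 1 ≤ m) :
    α.onE ⟨(p + a, l), hfull⟩ = β.onE ⟨(p + a, l), hfull⟩ :=
  congrArg (fun g => g.onE ⟨(a, l), hal⟩) hres

lemma square_traverses {m : Fin k → ℕ} (f : CGM (grid k m) E) (p : Fin k → ℕ)
    (i j : Fin k) (h : p + (Pi.single i 1 + Pi.single j 1) ≤ m)
    (h1 : p + Pi.single i 1 ≤ m) (h2 : (p + Pi.single i 1) + Pi.single j 1 ≤ m) :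
    Traverses (restrictTo f p (Pi.single i 1 + Pi.single j 1) h)
      [f.onE ⟨(p, i), h1⟩, f.onE ⟨(p + Pi.single i 1, j), h2⟩] := by
  have hc1 : E.c (f.onE ⟨(p, i), h1⟩) = i := f.c_comm _
  have hc2 : E.c (f.onE ⟨(p + Pi.single i 1, j), h2⟩) = j := f.c_comm _
  constructor
  · rw [colourVec_pair, hc1, hc2]
  · intro l hl
    match l, hl with
    | 0, _ =>
      show ∃ hh : colourVec E [] + Pi.single (E.c (f.onE ⟨(p, i), h1⟩)) 1 ≤ _,
        (restrictTo f p _ h).onE ⟨(colourVec E [], E.c (f.onE ⟨(p, i), h1⟩)), hh⟩ =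
          f.onE ⟨(p, i), h1⟩
      have hnil : colourVec E [] = 0 := rfl
      rw [hnil, hc1]
      refine ⟨?_, ?_⟩
      · intro r; simp only [Pi.add_apply, Pi.zero_apply]; omega
      · show f.onE ⟨(p + 0, i), _⟩ = f.onE ⟨(p, i), h1⟩
        exact onE_transport E f (add_zero p) i _ h1
    | 1, _ =>
      show ∃ hh : colourVec E [f.onE ⟨(p, i), h1⟩] +
          Pi.single (E.c (f.onE ⟨(p + Pi.single i 1, j), h2⟩)) 1 ≤ _,
        (restrictTo f p _ h).onE
          ⟨(colourVec E [f.onE ⟨(p, i), h1⟩],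
            E.c (f.onE ⟨(p + Pi.single i 1, j), h2⟩)), hh⟩ =
          f.onE ⟨(p + Pi.single i 1, j), h2⟩
      have hone : colourVec E [f.onE ⟨(p, i), h1⟩] = Pi.single i 1 := by
        simp [colourVec, hc1]
      rw [hone, hc2]
      exact ⟨le_rfl, rfl⟩

lemma square_pin {m : Fin k → ℕ} (hC : Complete E C) {α β : CGM (grid k m) E}
    (hα : CComp E C α) (hβ : CComp E C β) (p : Fin k → ℕ) (i j : Fin k) (hij : i ≠ j)
    (h : p + (Pi.single i 1 + Pi.single j 1) ≤ m)
    (h1 : p + Pi.single i 1 ≤ m) (h2 : (p + Pi.single i 1) + Pi.single j 1 ≤ m)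
    (he1 : α.onE ⟨(p, i), h1⟩ = β.onE ⟨(p, i), h1⟩)
    (he2 : α.onE ⟨(p + Pi.single i 1, j), h2⟩ = β.onE ⟨(p + Pi.single i 1, j), h2⟩) :
    restrictTo α p (Pi.single i 1 + Pi.single j 1) h =
      restrictTo β p (Pi.single i 1 + Pi.single j 1) h := by
  set e := α.onE ⟨(p, i), h1⟩ with hedef
  set f := α.onE ⟨(p + Pi.single i 1, j), h2⟩ with hfdef
  have hs : E.s e = E.r f := by
    rw [hedef, hfdef]
    exact (α.s_comm ⟨(p, i), h1⟩).trans (α.r_comm ⟨(p + Pi.single i 1, j), h2⟩).symm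
  have hcne : E.c e ≠ E.c f := by
    rw [hedef, hfdef]
    intro hc; exact hij ((α.c_comm _).symm.trans (hc.trans (α.c_comm _)))
  obtain ⟨φ, _, huniq⟩ := hC.2 e f hs hcne
  have t1 : Traverses (restrictTo α p (Pi.single i 1 + Pi.single j 1) h) [e, f] :=
    square_traverses E α p i j h h1 h2
  have t2 : Traverses (restrictTo β p (Pi.single i 1 + Pi.single j 1) h) [e, f] := by
    have t := square_traverses E β p i j h h1 h2
    rw [← he1, ← he2] at t
    rw [hedef, hfdef]
    exact t
  have u1 := huniq ⟨Pi.single i 1 + Pi.single j 1,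
      restrictTo α p (Pi.single i 1 + Pi.single j 1) h⟩ ⟨hα p i j hij h, t1⟩
  have u2 := huniq ⟨Pi.single i 1 + Pi.single j 1,
      restrictTo β p (Pi.single i 1 + Pi.single j 1) h⟩ ⟨hβ p i j hij h, t2⟩
  exact sigma_snd_eq (u1.trans u2.symm)

/-- Two `C`-compatible grid morphisms agreeing on the edge `(0,i)` and on the
region `≥ e_i` are equal. -/
lemma glue {m : Fin k → ℕ} (hC : Complete E C) (α β : CGM (grid k m) E)
    (hα : CComp E C α) (hβ : CComp E C β) (i : Fin k) (him : Pi.single i 1 ≤ m)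
    (h0 : ∀ h : (0 : Fin k → ℕ) + Pi.single i 1 ≤ m,
      α.onE ⟨(0, i), h⟩ = β.onE ⟨(0, i), h⟩)
    (hregE : ∀ (n : Fin k → ℕ) (l : Fin k), Pi.single i 1 ≤ n →
      ∀ he : n + Pi.single l 1 ≤ m, α.onE ⟨(n, l), he⟩ = β.onE ⟨(n, l), he⟩)
    (hregV : ∀ (n : Fin k → ℕ) (hn : n ≤ m), Pi.single i 1 ≤ n →
      α.onV ⟨n, hn⟩ = β.onV ⟨n, hn⟩) :
    α = β := by
  have key : ∀ N (n : Fin k → ℕ), (∑ j, n j) = N → n i = 0 →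
      ∀ j, ∀ h : n + Pi.single j 1 ≤ m, α.onE ⟨(n, j), h⟩ = β.onE ⟨(n, j), h⟩ := by
    intro N
    induction N using Nat.strong_induction_on with
    | _ N IH =>
    intro n hN hni
    have partA : ∀ h : n + Pi.single i 1 ≤ m, α.onE ⟨(n, i), h⟩ = β.onE ⟨(n, i), h⟩ := by
      by_cases hz : n = 0
      · subst hz; exact h0
      · intro h
        obtain ⟨l, hl⟩ := exists_pos_of_ne_zero hz
        have hli : l ≠ i := by
          intro hli; rw [hli] at hl; omega
        have hpl : (n - Pi.single l 1 : Fin k → ℕ) + Pi.single l 1 = n := by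
          funext r
          rcases eq_or_ne r l with rfl | hr
          · simp only [Pi.add_apply, Pi.sub_apply, Pi.single_eq_same]; omega
          · simp only [Pi.add_apply, Pi.sub_apply, Pi.single_eq_of_ne hr]; omega
        have hpi : (n - Pi.single l 1 : Fin k → ℕ) i = 0 := by
          simp only [Pi.sub_apply]; omega
        have hsum : (∑ j, (n - Pi.single l 1 : Fin k → ℕ) j) < N := by
          rw [← hN]; exact sum_sub_single_lt hl
        have hbound : (n - Pi.single l 1 : Fin k → ℕ) +
            (Pi.single i 1 + Pi.single l 1) ≤ m := by
          intro r
          have u1 : n r + (Pi.single i 1 : Fin k → ℕ) r ≤ m r := h r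
          have u2 := congrFun hpl r
          simp only [Pi.add_apply] at u1 u2 ⊢
          omega
        have hb1 : (n - Pi.single l 1 : Fin k → ℕ) + Pi.single i 1 ≤ m := by
          intro r
          have u := hbound r
          simp only [Pi.add_apply] at u ⊢
          omega
        have hb2 : ((n - Pi.single l 1 : Fin k → ℕ) + Pi.single i 1) + Pi.single l 1 ≤ m := by
          intro r
          have u := hbound r
          simp only [Pi.add_apply] at u ⊢
          omega
        have he1 := IH _ hsum (n - Pi.single l 1) rfl hpi i hb1
        have he2 := hregE ((n - Pi.single l 1 : Fin k → ℕ) + Pi.single i 1) l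
          (single_le_add _ i) hb2
        have pin := square_pin E C hC hα hβ (n - Pi.single l 1) i l (Ne.symm hli)
          hbound hb1 hb2 he1 he2
        have hal : (Pi.single l 1 + Pi.single i 1 : Fin k → ℕ) ≤
            Pi.single i 1 + Pi.single l 1 := le_of_eq (add_comm _ _)
        have hfull : ((n - Pi.single l 1 : Fin k → ℕ) + Pi.single l 1) +
            Pi.single i 1 ≤ m := by
          intro r
          have u1 : n r + (Pi.single i 1 : Fin k → ℕ) r ≤ m r := h r
          have u2 := congrFun hpl r
          simp only [Pi.add_apply] at u1 u2 ⊢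
          omega
        have hex := restrict_eq_onE E pin (Pi.single l 1) i hal hfull
        calc α.onE ⟨(n, i), h⟩
            = α.onE ⟨((n - Pi.single l 1 : Fin k → ℕ) + Pi.single l 1, i), hfull⟩ :=
              onE_transport E α hpl.symm i h hfull
          _ = β.onE ⟨((n - Pi.single l 1 : Fin k → ℕ) + Pi.single l 1, i), hfull⟩ := hex
          _ = β.onE ⟨(n, i), h⟩ := onE_transport E β hpl i hfull h
    intro j h
    rcases eq_or_ne j i with rfl | hji
    · exact partA h
    · -- square at n in colours (i, j)
      have hbound : n + (Pi.single i 1 + Pi.single j 1) ≤ m := by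
        intro r
        have u1 : n r + (Pi.single j 1 : Fin k → ℕ) r ≤ m r := h r
        have u2 : (Pi.single i 1 : Fin k → ℕ) r ≤ m r := him r
        rcases eq_or_ne r i with rfl | hr
        · simp only [Pi.add_apply, Pi.single_eq_same,
            Pi.single_eq_of_ne (Ne.symm hji)] at u1 u2 ⊢
          omega
        · simp only [Pi.add_apply, Pi.single_eq_of_ne hr] at u1 ⊢
          omega
      have hb1 : n + Pi.single i 1 ≤ m := by
        intro r
        have u := hbound r
        simp only [Pi.add_apply] at u ⊢
        omega
      have hb2 : (n + Pi.single i 1) + Pi.single j 1 ≤ m := by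
        intro r
        have u := hbound r
        simp only [Pi.add_apply] at u ⊢
        omega
      have he1 := partA hb1
      have he2 := hregE (n + Pi.single i 1) j (single_le_add _ i) hb2
      have pin := square_pin E C hC hα hβ n i j (Ne.symm hji) hbound hb1 hb2 he1 he2
      have hal : ((0 : Fin k → ℕ) + Pi.single j 1 : Fin k → ℕ) ≤
          Pi.single i 1 + Pi.single j 1 := by
        intro r
        simp only [Pi.add_apply, Pi.zero_apply]
        omega
      have hfull : (n + 0) + Pi.single j 1 ≤ m := by
        rw [add_zero]; exact h
      have hex := restrict_eq_onE E pin 0 j hal hfull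
      calc α.onE ⟨(n, j), h⟩
          = α.onE ⟨(n + 0, j), hfull⟩ := onE_transport E α (add_zero n).symm j h hfull
        _ = β.onE ⟨(n + 0, j), hfull⟩ := hex
        _ = β.onE ⟨(n, j), h⟩ := onE_transport E β (add_zero n) j hfull h
  refine CGM.ext ?_ ?_
  · funext x
    by_cases hx : Pi.single i 1 ≤ x.1
    · exact hregV x.1 x.2 hx
    · have hxi : x.1 i = 0 := by
        by_contra hc
        exact hx (single_le (by omega))
      have hni : x.1 + Pi.single i 1 ≤ m := by
        intro r
        have u1 : x.1 r ≤ m r := x.2 r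
        have u2 : (Pi.single i 1 : Fin k → ℕ) r ≤ m r := him r
        rcases eq_or_ne r i with rfl | hr
        · simp only [Pi.add_apply, Pi.single_eq_same] at u2 ⊢
          omega
        · simp only [Pi.add_apply, Pi.single_eq_of_ne hr]
          omega
      calc α.onV x = E.r (α.onE ⟨(x.1, i), hni⟩) := (α.r_comm ⟨(x.1, i), hni⟩).symm
        _ = E.r (β.onE ⟨(x.1, i), hni⟩) := by
            rw [key _ x.1 rfl hxi i hni]
        _ = β.onV x := β.r_comm ⟨(x.1, i), hni⟩
  · funext e
    by_cases hx : Pi.single i 1 ≤ e.1.1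
    · exact hregE e.1.1 e.1.2 hx e.2
    · have hxi : e.1.1 i = 0 := by
        by_contra hc
        exact hx (single_le (by omega))
      exact key _ e.1.1 rfl hxi e.1.2 e.2

end Glue

/-! ### Auxiliary: surjectivity of `θ` -/

section Surj

variable {k : ℕ} {O H : Type} (Γ : KGraph k O H) (E : ColouredGraph k)
  (ψ : CGM (skel Γ) E) (C : Set (MorphOf E))

lemma onV_transport {m : Fin k → ℕ} (α : CGM (grid k m) E) {a b : Fin k → ℕ}
    (hab : a = b) (ha : a ≤ m) (hb' : b ≤ m) :
    α.onV ⟨a, ha⟩ = α.onV ⟨b, hb'⟩ := by subst hab; rfl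

lemma single_add_sub {m : Fin k → ℕ} {i : Fin k} (h : 1 ≤ m i) :
    Pi.single i 1 + (m - Pi.single i 1) = m := by
  funext r
  rcases eq_or_ne r i with rfl | hr
  · simp only [Pi.add_apply, Pi.sub_apply, Pi.single_eq_same]; omega
  · simp only [Pi.add_apply, Pi.sub_apply, Pi.single_eq_of_ne hr]; omega

lemma restrict_restrict {m : Fin k → ℕ} (f : CGM (grid k m) E) (p q : Fin k → ℕ)
    (h : p + q ≤ m) (p' q' : Fin k → ℕ) (h' : p' + q' ≤ q) :
    restrictTo (restrictTo f p q h) p' q' h' =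
      restrictTo f (p + p') q'
        (by rw [add_assoc]; exact le_trans (add_le_add_right h' p) h) := by
  refine CGM.ext ?_ ?_
  · funext x
    exact congrArg f.onV (gridV_eq (add_assoc p p' x.1).symm _)
  · funext e
    exact congrArg f.onE (gridE_eq (add_assoc p p' e.1.1).symm _)

lemma restrict_ccomp {m : Fin k → ℕ} {f : CGM (grid k m) E} (hf : CComp E C f)
    (p q : Fin k → ℕ) (h : p + q ≤ m) : CComp E C (restrictTo f p q h) := by
  intro p' i j hij h'
  rw [restrict_restrict E f p q h p' (Pi.single i 1 + Pi.single j 1) h']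
  exact hf (p + p') i j hij _

lemma theta_surj (hC : Complete E C)
    (hsq : ∀ φ ∈ skelSquares Γ, (⟨φ.1, ψ.compose φ.2⟩ : MorphOf E) ∈ C)
    (hV : Function.Bijective ψ.onV) (hE : Function.Bijective ψ.onE) :
    ∀ N (m : Fin k → ℕ), (∑ j, m j) = N → ∀ (f : CGM (grid k m) E), CComp E C f →
      ∃ γ : H, thetaM Γ E ψ γ = ⟨m, f⟩ := by
  intro N
  induction N using Nat.strong_induction_on with
  | _ N IH =>
  intro m hN f hf
  by_cases hz : m = 0
  · subst hz
    obtain ⟨v, hv⟩ := hV.2 (f.onV ⟨0, le_rfl⟩)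
    refine ⟨Γ.idm v, ?_⟩
    have hd : Γ.d (Γ.idm v) = 0 := Γ.d_idm v
    rw [thetaM_eq Γ E ψ (Γ.idm v) 0 hd]
    refine congrArg (fun g => (⟨0, g⟩ : MorphOf E)) (CGM.ext ?_ ?_)
    · funext x
      have hx0 : x = ⟨0, le_rfl⟩ := Subtype.ext (funext fun r => Nat.le_zero.mp (x.2 r))
      rw [hx0]
      have step : (thetaCGM Γ E ψ (Γ.idm v) 0 hd).onV ⟨0, le_rfl⟩ =
          ψ.onV (Γ.src (Γ.fst (Γ.idm v) 0 hd.ge)) := rfl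
      rw [step, Γ.fst_zero (Γ.idm v) hd.ge, Γ.src_idm]
      exact (congrArg ψ.onV (Γ.rng_idm v)).trans hv
    · funext e
      exfalso
      have h2 : (e.1.1 + Pi.single e.1.2 1 : Fin k → ℕ) e.1.2 ≤ (0 : Fin k → ℕ) e.1.2 :=
        e.2 e.1.2
      simp only [Pi.add_apply, Pi.single_eq_same, Pi.zero_apply] at h2
      omega
  · obtain ⟨i, hi⟩ := exists_pos_of_ne_zero hz
    have him : Pi.single i 1 ≤ m := single_le hi
    have hb0 : (0 : Fin k → ℕ) + Pi.single i 1 ≤ m := by rwa [zero_add]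
    obtain ⟨ε', hε'⟩ := hE.2 (f.onE ⟨(0, i), hb0⟩)
    have hcol : (skel Γ).c ε' = i := by
      rw [← ψ.c_comm ε', hε']
      exact f.c_comm _
    have hdeg : Γ.d ε'.1 = Pi.single i 1 := by
      have hspec := Classical.choose_spec ε'.2
      rw [show Classical.choose ε'.2 = i from hcol] at hspec
      exact hspec
    have hres_le : Pi.single i 1 + (m - Pi.single i 1) ≤ m := le_of_eq (single_add_sub hi)
    have hf' : CComp E C (restrictTo f (Pi.single i 1) (m - Pi.single i 1) hres_le) :=
      restrict_ccomp E C hf _ _ _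
    have hsum' : (∑ j, (m - Pi.single i 1 : Fin k → ℕ) j) < N := by
      rw [← hN]; exact sum_sub_single_lt hi
    obtain ⟨γ', hγ'⟩ := IH _ hsum' (m - Pi.single i 1) rfl _ hf'
    have hd' : Γ.d γ' = m - Pi.single i 1 := congrArg Sigma.fst hγ'
    have Hf' : thetaCGM Γ E ψ γ' (m - Pi.single i 1) hd' =
        restrictTo f (Pi.single i 1) (m - Pi.single i 1) hres_le :=
      sigma_snd_eq ((thetaM_eq Γ E ψ γ' _ hd').symm.trans hγ')
    -- composability
    have hrngγ' : ψ.onV (Γ.rng γ') = f.onV ⟨Pi.single i 1 + 0, by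
        rw [add_zero]; exact him⟩ := by
      have s2 : Γ.src (Γ.fst γ' 0 zero_le) = Γ.rng γ' := by
        rw [Γ.fst_zero γ' zero_le, Γ.src_idm]
      calc ψ.onV (Γ.rng γ')
          = ψ.onV (Γ.src (Γ.fst γ' 0 zero_le)) := by rw [s2]
        _ = (thetaCGM Γ E ψ γ' (m - Pi.single i 1) hd').onV ⟨0, zero_le⟩ := rfl
        _ = (restrictTo f (Pi.single i 1) (m - Pi.single i 1) hres_le).onV
              ⟨0, zero_le⟩ := by rw [Hf']
        _ = f.onV ⟨Pi.single i 1 + 0, by rw [add_zero]; exact him⟩ := rfl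
    have hcomp : Γ.src ε'.1 = Γ.rng γ' := by
      apply hV.1
      calc ψ.onV (Γ.src ε'.1)
          = E.s (ψ.onE ε') := (ψ.s_comm ε').symm
        _ = E.s (f.onE ⟨(0, i), hb0⟩) := by rw [hε']
        _ = f.onV ⟨(0 : Fin k → ℕ) + Pi.single i 1, hb0⟩ := f.s_comm _
        _ = f.onV ⟨Pi.single i 1 + 0, by rw [add_zero]; exact him⟩ :=
            onV_transport E f ((zero_add _).trans (add_zero _).symm) _ _
        _ = ψ.onV (Γ.rng γ') := hrngγ'.symm
    refine ⟨Γ.comp ε'.1 γ', ?_⟩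
    have hdγ : Γ.d (Γ.comp ε'.1 γ') = m := by
      rw [Γ.d_comp _ _ hcomp, hdeg, hd']
      exact single_add_sub hi
    have hmle : Pi.single i 1 ≤ Γ.d (Γ.comp ε'.1 γ') := by rw [hdγ]; exact him
    obtain ⟨hfstγ, hsndγ⟩ := Γ.factor_eq (Γ.comp ε'.1 γ') (Pi.single i 1) hmle
      ε'.1 γ' hcomp rfl hdeg
    rw [thetaM_eq Γ E ψ (Γ.comp ε'.1 γ') m hdγ]
    refine congrArg (fun g => (⟨m, g⟩ : MorphOf E))
      (glue E C hC _ f (theta_ccomp Γ E ψ hsq _ m hdγ) hf i him ?_ ?_ ?_)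
    · -- the edge (0, i)
      intro h
      have v1 : (thetaCGM Γ E ψ (Γ.comp ε'.1 γ') m hdγ).onE ⟨(0, i), h⟩ =
          ψ.onE (Γ.segE (Γ.comp ε'.1 γ') 0 i (h.trans_eq hdγ.symm)) := rfl
      have v2 : Γ.segE (Γ.comp ε'.1 γ') 0 i (h.trans_eq hdγ.symm) = ε' := by
        apply Subtype.ext
        show Γ.seg (Γ.comp ε'.1 γ') 0 (0 + Pi.single i 1) (pi_le_add_right 0 _)
          (h.trans_eq hdγ.symm) = ε'.1
        rw [Γ.seg_zero _ _ zero_le (h.trans_eq hdγ.symm)]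
        rw [Γ.fst_congr rfl (zero_add (Pi.single i 1)) (h.trans_eq hdγ.symm)]
        exact hfstγ.symm
      rw [v1, v2, hε']
    · -- edges in the region ≥ e_i
      intro n l hn he
      have hq : Pi.single i 1 + (n - Pi.single i 1) = n := by
        funext r
        have u : (Pi.single i 1 : Fin k → ℕ) r ≤ n r := hn r
        simp only [Pi.add_apply, Pi.sub_apply]
        omega
      have hql : (n - Pi.single i 1 : Fin k → ℕ) + Pi.single l 1 ≤ m - Pi.single i 1 := by
        intro r
        have u1 : (n + Pi.single l 1 : Fin k → ℕ) r ≤ m r := he r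
        have u2 : (Pi.single i 1 : Fin k → ℕ) r ≤ n r := hn r
        have u3 : (Pi.single i 1 : Fin k → ℕ) r ≤ m r := him r
        simp only [Pi.add_apply, Pi.sub_apply] at u1 u2 u3 ⊢
        omega
      have hqlγ' : (n - Pi.single i 1 : Fin k → ℕ) + Pi.single l 1 ≤ Γ.d γ' := by
        rw [hd']; exact hql
      -- identify segments
      have hseg1 : Γ.seg (Γ.comp ε'.1 γ') n (n + Pi.single l 1) (pi_le_add_right n _)
          (he.trans_eq hdγ.symm) =
          Γ.seg γ' (n - Pi.single i 1) ((n - Pi.single i 1) + Pi.single l 1)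
            (pi_le_add_right _ _) hqlγ' := by
        have c1 : Γ.seg γ' (n - Pi.single i 1) ((n - Pi.single i 1) + Pi.single l 1)
            (pi_le_add_right _ _) hqlγ' =
            Γ.seg (Γ.snd (Γ.comp ε'.1 γ') (Pi.single i 1) hmle) (n - Pi.single i 1)
              ((n - Pi.single i 1) + Pi.single l 1) (pi_le_add_right _ _)
              (by rw [← hsndγ]; exact hqlγ') :=
          Γ.seg_congr_hom hsndγ _ _ _ _
        have hb2 : (n - Pi.single i 1 : Fin k → ℕ) + Pi.single l 1 ≤
            Γ.d (Γ.comp ε'.1 γ') - Pi.single i 1 := by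
          intro r
          have u1 : (n - Pi.single i 1 + Pi.single l 1 : Fin k → ℕ) r ≤
              (m - Pi.single i 1 : Fin k → ℕ) r := hql r
          have u2 := congrFun hdγ r
          have u3 : (Pi.single i 1 : Fin k → ℕ) r ≤ m r := him r
          simp only [Pi.sub_apply, Pi.add_apply] at u1 ⊢
          omega
        have c2 := Γ.snd_seg (Γ.comp ε'.1 γ') (Pi.single i 1) (n - Pi.single i 1)
          ((n - Pi.single i 1) + Pi.single l 1) (pi_le_add_right _ _) hmle hb2
        rw [c1, c2]
        exact (Γ.seg_congr (Γ.comp ε'.1 γ') hq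
          (show Pi.single i 1 + (n - Pi.single i 1 + Pi.single l 1) = n + Pi.single l 1 by
            rw [← add_assoc, hq]) _ _).symm
      calc (thetaCGM Γ E ψ (Γ.comp ε'.1 γ') m hdγ).onE ⟨(n, l), he⟩
          = ψ.onE (Γ.segE (Γ.comp ε'.1 γ') n l (he.trans_eq hdγ.symm)) := rfl
        _ = ψ.onE (Γ.segE γ' (n - Pi.single i 1) l
              (hqlγ'.trans_eq (hd'.symm ▸ rfl : Γ.d γ' = Γ.d γ'))) := by
            exact congrArg ψ.onE (Subtype.ext hseg1)
        _ = (thetaCGM Γ E ψ γ' (m - Pi.single i 1) hd').onE ⟨(n - Pi.single i 1, l), hql⟩ :=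
            rfl
        _ = (restrictTo f (Pi.single i 1) (m - Pi.single i 1) hres_le).onE
              ⟨(n - Pi.single i 1, l), hql⟩ := by rw [Hf']
        _ = f.onE ⟨(Pi.single i 1 + (n - Pi.single i 1), l), by
              rw [hq]; exact he⟩ := rfl
        _ = f.onE ⟨(n, l), he⟩ := onE_transport E f hq l _ he
    · -- vertices in the region ≥ e_i
      intro n hn hin
      have hq : Pi.single i 1 + (n - Pi.single i 1) = n := by
        funext r
        have u : (Pi.single i 1 : Fin k → ℕ) r ≤ n r := hin r
        simp only [Pi.add_apply, Pi.sub_apply]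
        omega
      have hqm : (n - Pi.single i 1 : Fin k → ℕ) ≤ m - Pi.single i 1 := by
        intro r
        have u1 : n r ≤ m r := hn r
        simp only [Pi.sub_apply]
        omega
      have hqγ' : (n - Pi.single i 1 : Fin k → ℕ) ≤ Γ.d γ' := by rw [hd']; exact hqm
      have hnle : n ≤ Γ.d (Γ.comp ε'.1 γ') := hn.trans_eq hdγ.symm
      have hinle : Pi.single i 1 ≤ n := hin
      -- src (fst γ n) = src (fst γ' (n - e_i))
      have hfst' : Γ.fst γ' (n - Pi.single i 1) hqγ' =
          Γ.seg (Γ.comp ε'.1 γ') (Pi.single i 1) n hinle hnle := by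
        have c1 : Γ.fst γ' (n - Pi.single i 1) hqγ' =
            Γ.fst (Γ.snd (Γ.comp ε'.1 γ') (Pi.single i 1) hmle) (n - Pi.single i 1)
              (by rw [← hsndγ]; exact hqγ') :=
          Γ.fst_congr hsndγ rfl _
        have hb2 : (n - Pi.single i 1 : Fin k → ℕ) ≤
            Γ.d (Γ.comp ε'.1 γ') - Pi.single i 1 := by
          intro r
          have u1 : (n - Pi.single i 1 : Fin k → ℕ) r ≤
              (m - Pi.single i 1 : Fin k → ℕ) r := hqm r
          have u2 := congrFun hdγ r
          have u3 : (Pi.single i 1 : Fin k → ℕ) r ≤ m r := him r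
          simp only [Pi.sub_apply] at u1 ⊢
          omega
        have c2 := Γ.fst_snd (Γ.comp ε'.1 γ') (Pi.single i 1) (n - Pi.single i 1) hmle hb2
        rw [c1, c2]
        exact Γ.seg_congr (Γ.comp ε'.1 γ') rfl hq _ _
      have hsrc : Γ.src (Γ.fst (Γ.comp ε'.1 γ') n hnle) =
          Γ.src (Γ.fst γ' (n - Pi.single i 1) hqγ') := by
        rw [hfst', Γ.src_seg]
      calc (thetaCGM Γ E ψ (Γ.comp ε'.1 γ') m hdγ).onV ⟨n, hn⟩
          = ψ.onV (Γ.src (Γ.fst (Γ.comp ε'.1 γ') n hnle)) := rfl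
        _ = ψ.onV (Γ.src (Γ.fst γ' (n - Pi.single i 1) hqγ')) := by rw [hsrc]
        _ = (thetaCGM Γ E ψ γ' (m - Pi.single i 1) hd').onV ⟨n - Pi.single i 1, hqm⟩ := rfl
        _ = (restrictTo f (Pi.single i 1) (m - Pi.single i 1) hres_le).onV
              ⟨n - Pi.single i 1, hqm⟩ := by rw [Hf']
        _ = f.onV ⟨Pi.single i 1 + (n - Pi.single i 1), by rw [hq]; exact hn⟩ := rfl
        _ = f.onV ⟨n, hn⟩ := onV_transport E f hq _ hn

end Surj

/-! ### Auxiliary: degree-zero extensionality -/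

section Deg0

variable {k : ℕ}

lemma morph_deg0_ext {E : ColouredGraph k} (x y : MorphOf E) (hx : x.1 = 0)
    (hy : y.1 = 0) (hr : gRng x.2 = gRng y.2) : x = y := by
  obtain ⟨mx, fx⟩ := x
  obtain ⟨my, fy⟩ := y
  dsimp only at hx hy
  subst hx; subst hy
  refine congrArg (fun g => (⟨0, g⟩ : MorphOf E)) (CGM.ext ?_ ?_)
  · funext z
    have hz : z = ⟨0, le_rfl⟩ :=
      Subtype.ext (funext fun r => Nat.le_zero.mp (z.2 r))
    rw [hz]
    exact hr
  · funext e
    exfalso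
    have h2 : (e.1.1 + Pi.single e.1.2 1 : Fin k → ℕ) e.1.2 ≤ (0 : Fin k → ℕ) e.1.2 :=
      e.2 e.1.2
    simp only [Pi.add_apply, Pi.single_eq_same, Pi.zero_apply] at h2
    omega

lemma restrict_morph_congr {E : ColouredGraph k} {x y : MorphOf E} (h : x = y)
    (p q : Fin k → ℕ) (hx : p + q ≤ x.1) :
    (⟨q, restrictTo x.2 p q hx⟩ : MorphOf E) = ⟨q, restrictTo y.2 p q (h ▸ hx)⟩ := by
  subst h; rfl

end Deg0

/-- If `ψ` is a coloured-graph isomorphism from the skeleton of `Γ` onto `E`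
carrying the squares of `Γ` into `C`, then `γ ↦ θ_γ` — where `θ_γ` acts by
`ψ` on vertices and segments of `γ` — is an isomorphism of `k`-graphs from
`Γ` onto `Λ_{(E,C)}`. -/
theorem skeleton_iso_induces_kGraph_iso {k : ℕ} {O H : Type} (Γ : KGraph k O H)
    (E : ColouredGraph k) (C : Set (MorphOf E))
    (hC : Complete E C) (hA : Associative E C)
    (ψ : CGM (skel Γ) E)
    (hψV : Function.Bijective ψ.onV) (hψE : Function.Bijective ψ.onE)
    (hsq : ∀ φ ∈ skelSquares Γ, (⟨φ.1, ψ.compose φ.2⟩ : MorphOf E) ∈ C)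
    (ΛE : KGraph k E.V {φ : MorphOf E // CComp E C φ.2}) (hΛE : IsLamEC E C ΛE) :
    ∃ θ : KFunctor Γ ΛE,
      Function.Bijective θ.onObj ∧ Function.Bijective θ.onHom ∧
      θ.onObj = ψ.onV ∧
      (∀ γ : H, (θ.onHom γ).1.1 = Γ.d γ) ∧
      (∀ (γ : H) (n : Fin k → ℕ) (hn : n ≤ (θ.onHom γ).1.1) (a : H),
        IsSegment Γ γ a 0 n → (θ.onHom γ).1.2.onV ⟨n, hn⟩ = ψ.onV (Γ.src a)) ∧
      (∀ (γ : H) (n : Fin k → ℕ) (i : Fin k)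
        (hn : n + Pi.single i 1 ≤ (θ.onHom γ).1.1)
        (a : H) (ha : Γ.d a = Pi.single i 1),
        IsSegment Γ γ a n (n + Pi.single i 1) →
          (θ.onHom γ).1.2.onE ⟨(n, i), hn⟩ = ψ.onE ⟨a, ⟨i, ha⟩⟩) := by
  classical
  set Θ : H → {φ : MorphOf E // CComp E C φ.2} :=
    fun γ => ⟨thetaM Γ E ψ γ, theta_ccomp Γ E ψ hsq γ (Γ.d γ) rfl⟩ with hΘ
  have hinj : Function.Injective Θ := by
    intro a b hab
    exact thetaM_inj Γ E ψ hψV.1 hψE.1 (congrArg Subtype.val hab)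
  have hsurjM : ∀ x : MorphOf E, CComp E C x.2 → ∃ γ : H, thetaM Γ E ψ γ = x := by
    intro x hx
    obtain ⟨γ, hγ⟩ := theta_surj Γ E ψ C hC hsq hψV hψE (∑ j, x.1 j) x.1 rfl x.2 hx
    exact ⟨γ, hγ⟩
  have hsurj : Function.Surjective Θ := by
    intro x
    obtain ⟨γ, hγ⟩ := hsurjM x.1 x.2
    exact ⟨γ, Subtype.ext hγ⟩
  have hRng : ∀ γ : H, gRng (thetaM Γ E ψ γ).2 = ψ.onV (Γ.rng γ) := by
    intro γ
    show ψ.onV (Γ.src (Γ.fst γ 0 zero_le)) = ψ.onV (Γ.rng γ)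
    rw [Γ.fst_zero γ zero_le, Γ.src_idm]
  have hSrc : ∀ γ : H, gSrc (thetaM Γ E ψ γ).2 = ψ.onV (Γ.src γ) := by
    intro γ
    show ψ.onV (Γ.src (Γ.fst γ (Γ.d γ) le_rfl)) = ψ.onV (Γ.src γ)
    rw [Γ.fst_top γ]
  have hcompΘ : ∀ μ ν : H, Γ.src μ = Γ.rng ν → Θ (Γ.comp μ ν) = ΛE.comp (Θ μ) (Θ ν) := by
    intro μ ν hsrc
    have hsrc' : ΛE.src (Θ μ) = ΛE.rng (Θ ν) := by
      rw [hΛE.2.2.1 (Θ μ), hΛE.2.1 (Θ ν)]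
      show gSrc (thetaM Γ E ψ μ).2 = gRng (thetaM Γ E ψ ν).2
      rw [hRng, hSrc, hsrc]
    obtain ⟨hdcomp, h1, h2, hres1, hres2⟩ := hΛE.2.2.2.2 (Θ μ) (Θ ν) hsrc'
    obtain ⟨γ, hγ⟩ := hsurjM (ΛE.comp (Θ μ) (Θ ν)).1 (ΛE.comp (Θ μ) (Θ ν)).2
    have hdγ2 : Γ.d γ = Γ.d μ + Γ.d ν := by
      have hh := congrArg Sigma.fst hγ
      exact hh.trans hdcomp
    have hμle : Γ.d μ ≤ Γ.d γ := by rw [hdγ2]; exact pi_le_add_right _ _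
    have hμ0 : (0 : Fin k → ℕ) + Γ.d μ ≤ Γ.d γ := by rw [zero_add]; exact hμle
    have hμν : Γ.d μ + Γ.d ν ≤ Γ.d γ := le_of_eq hdγ2.symm
    -- identify fst γ (d μ) with μ
    have hseg0 : Γ.seg γ 0 (0 + Γ.d μ) (pi_le_add_right 0 _) hμ0 =
        Γ.fst γ (Γ.d μ) hμle := by
      rw [Γ.seg_zero γ (0 + Γ.d μ) zero_le hμ0]
      exact Γ.fst_congr rfl (zero_add (Γ.d μ)) hμ0
    have step1 : (⟨Γ.d μ, restrictTo (ΛE.comp (Θ μ) (Θ ν)).1.2 0 (Γ.d μ) h1⟩ : MorphOf E) =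
        ⟨Γ.d μ, restrictTo (thetaM Γ E ψ γ).2 0 (Γ.d μ) (by rw [hγ]; exact h1)⟩ :=
      restrict_morph_congr hγ.symm 0 (Γ.d μ) h1
    have step2 : (⟨Γ.d μ, restrictTo (thetaM Γ E ψ γ).2 0 (Γ.d μ)
          (by rw [hγ]; exact h1)⟩ : MorphOf E) =
        thetaM Γ E ψ (Γ.fst γ (Γ.d μ) hμle) := by
      have t := theta_restrict Γ E ψ γ (Γ.d γ) rfl 0 (Γ.d μ) hμ0
      have t2 := congrArg (fun g => (⟨Γ.d μ, g⟩ : MorphOf E)) t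
      refine t2.trans ?_
      refine ((thetaM_eq Γ E ψ (Γ.seg γ 0 (0 + Γ.d μ) (pi_le_add_right 0 _) hμ0) (Γ.d μ)
        (by rw [Γ.d_seg]; exact pi_add_sub_cancel 0 _)).symm).trans ?_
      exact congrArg (thetaM Γ E ψ) hseg0
    have hfstμ : Γ.fst γ (Γ.d μ) hμle = μ := by
      apply thetaM_inj Γ E ψ hψV.1 hψE.1
      exact step2.symm.trans (step1.symm.trans hres1)
    -- identify snd γ (d μ) with ν
    have hsegtop : Γ.seg γ (Γ.d μ) (Γ.d μ + Γ.d ν) (pi_le_add_right _ _) hμν =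
        Γ.snd γ (Γ.d μ) hμle := by
      have c := Γ.seg_congr γ (p := Γ.d μ) (q := Γ.d μ + Γ.d ν) rfl hdγ2.symm
        (pi_le_add_right _ _) hμν
      exact c.trans (Γ.seg_top γ (Γ.d μ) hμle)
    have step1' : (⟨Γ.d ν, restrictTo (ΛE.comp (Θ μ) (Θ ν)).1.2 (Γ.d μ) (Γ.d ν) h2⟩ :
          MorphOf E) =
        ⟨Γ.d ν, restrictTo (thetaM Γ E ψ γ).2 (Γ.d μ) (Γ.d ν) (by rw [hγ]; exact h2)⟩ :=
      restrict_morph_congr hγ.symm (Γ.d μ) (Γ.d ν) h2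
    have step2' : (⟨Γ.d ν, restrictTo (thetaM Γ E ψ γ).2 (Γ.d μ) (Γ.d ν)
          (by rw [hγ]; exact h2)⟩ : MorphOf E) =
        thetaM Γ E ψ (Γ.snd γ (Γ.d μ) hμle) := by
      have t := theta_restrict Γ E ψ γ (Γ.d γ) rfl (Γ.d μ) (Γ.d ν) hμν
      have t2 := congrArg (fun g => (⟨Γ.d ν, g⟩ : MorphOf E)) t
      refine t2.trans ?_
      refine ((thetaM_eq Γ E ψ (Γ.seg γ (Γ.d μ) (Γ.d μ + Γ.d ν) (pi_le_add_right _ _) hμν)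
        (Γ.d ν) (by rw [Γ.d_seg]; exact pi_add_sub_cancel _ _)).symm).trans ?_
      exact congrArg (thetaM Γ E ψ) hsegtop
    have hsndν : Γ.snd γ (Γ.d μ) hμle = ν := by
      apply thetaM_inj Γ E ψ hψV.1 hψE.1
      exact step2'.symm.trans (step1'.symm.trans hres2)
    have hγeq : Γ.comp μ ν = γ := by
      rw [← hfstμ, ← hsndν]
      exact Γ.comp_fst_snd γ (Γ.d μ) hμle
    apply Subtype.ext
    show thetaM Γ E ψ (Γ.comp μ ν) = (ΛE.comp (Θ μ) (Θ ν)).1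
    rw [hγeq]
    exact hγ
  refine ⟨⟨ψ.onV, Θ, ?_, ?_, ?_, hcompΘ, ?_⟩, hψV, ⟨hinj, hsurj⟩, rfl,
    fun γ => rfl, ?_, ?_⟩
  · intro γ
    rw [hΛE.2.1 (Θ γ)]
    exact hRng γ
  · intro γ
    rw [hΛE.2.2.1 (Θ γ)]
    exact hSrc γ
  · intro v
    apply Subtype.ext
    refine morph_deg0_ext _ _ (Γ.d_idm v) (hΛE.2.2.2.1 (ψ.onV v)).1 ?_
    rw [(hΛE.2.2.2.1 (ψ.onV v)).2]
    rw [hRng (Γ.idm v), Γ.rng_idm]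
  · intro γ
    exact hΛE.1 (Θ γ)
  · -- vertices are given by sources of initial segments
    intro γ n hn a hseg
    obtain ⟨A, B, hA1, hA2, hA3, hA4, hA5⟩ := hseg
    have ha' : a = Γ.seg γ 0 n zero_le hn :=
      Γ.seg_unique γ 0 n zero_le hn A a B hA1 hA2 hA3 hA4 hA5
    show ψ.onV (Γ.src (Γ.fst γ n hn)) = ψ.onV (Γ.src a)
    rw [ha', Γ.seg_zero γ n zero_le hn]
  · -- edges are given by segments of degree `e_i`
    intro γ n i hn a ha hseg
    obtain ⟨A, B, hA1, hA2, hA3, hA4, hA5⟩ := hseg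
    have ha' : a = Γ.seg γ n (n + Pi.single i 1) (pi_le_add_right n _) hn :=
      Γ.seg_unique γ n (n + Pi.single i 1) (pi_le_add_right n _) hn A a B
        hA1 hA2 hA3 hA4 hA5
    show ψ.onE (Γ.segE γ n i hn) = ψ.onE ⟨a, ⟨i, ha⟩⟩
    exact congrArg ψ.onE (Subtype.ext ha'.symm)

end Paper
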